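/- arXiv:2312.06019 — 4 statements merged into one kernel-verified Lean document; each statement's English description precedes it below -/
import Mathlib

section
/- Let X⁰, X¹ ∈ ℝ be constants. Suppose the eight components ψ_{ς₀ς₁ς₂} are C¹ on an open subset of ℝ⁶ and satisfy the free multi-time equations there. For μ, ν, κ ∈ {0,1} define the current j_X^{μνκ} := (1/4) Σ_{ς₀,ς₁,ς₂ ∈ {−1,+1}} (X⁰ + ς₀X¹)(−ς₀)^μ(−ς₁)^ν(−ς₂)^κ |ψ_{ς₀ς₁ς₂}|², where (−ς)^μ means 1 if μ = 0 and −ς if μ = 1. Then the current is jointly conserved: for all ν, κ one has ∂_{t_ph} j_X^{0νκ} + ∂_{s_ph} j_X^{1νκ} = 0; for all μ, κ one has ∂_{t_e1} j_X^{μ0κ} + ∂_{s_e1} j_X^{μ1κ} = 0; and for all μ, ν one has ∂_{t_e2} j_X^{μν0} + ∂_{s_e2} j_X^{μν1} = 0. -/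
open Complex

noncomputable section

/-- Partial derivative (in coordinate `i`) of a complex-valued function on `ℝⁿ`. -/
def pdC {n : ℕ} (i : Fin n) (f : (Fin n → ℝ) → ℂ) (x : Fin n → ℝ) : ℂ :=
  fderiv ℝ f x (Pi.single i 1)

/-- Partial derivative (in coordinate `i`) of a real-valued function on `ℝⁿ`. -/
def pdR {n : ℕ} (i : Fin n) (f : (Fin n → ℝ) → ℝ) (x : Fin n → ℝ) : ℝ :=
  fderiv ℝ f x (Pi.single i 1)

/-- `(−ς)^μ`, meaning `1` if `μ = 0` and `−ς` if `μ = 1`. -/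
def sgnpow (μ : ℕ) (ς : ℝ) : ℝ := if μ = 0 then 1 else -ς

/-- The current `j_X^{μνκ}` built from the eight components `ψ_{ς₀ς₁ς₂}`.
Coordinates on `ℝ⁶` are `(t_ph, s_ph, t_e1, s_e1, t_e2, s_e2)`. -/
def currentJ (X0 X1 : ℝ) (ψ : ℝ → ℝ → ℝ → (Fin 6 → ℝ) → ℂ) (μ ν κ : ℕ)
    (x : Fin 6 → ℝ) : ℝ :=
  (1 / 4) * ∑ ς₀ ∈ ({-1, 1} : Finset ℝ), ∑ ς₁ ∈ ({-1, 1} : Finset ℝ),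
      ∑ ς₂ ∈ ({-1, 1} : Finset ℝ),
        (X0 + ς₀ * X1) * sgnpow μ ς₀ * sgnpow ν ς₁ * sgnpow κ ς₂ * ‖ψ ς₀ ς₁ ς₂ x‖ ^ 2

lemma hasFDerivAt_norm_sq {E : Type*} [NormedAddCommGroup E] [NormedSpace ℝ E]
    {f : E → ℂ} {f' : E →L[ℝ] ℂ} {x : E} (hf : HasFDerivAt f f' x) :
    HasFDerivAt (fun y => ‖f y‖ ^ 2)
      ((2 * (f x).re) • ((Complex.reCLM : ℂ →L[ℝ] ℝ).comp f')
        + (2 * (f x).im) • ((Complex.imCLM : ℂ →L[ℝ] ℝ).comp f')) x := by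
  have h1 : HasFDerivAt (fun y => (f y).re) ((Complex.reCLM : ℂ →L[ℝ] ℝ).comp f') x :=
    (Complex.reCLM.hasFDerivAt).comp x hf
  have h2 : HasFDerivAt (fun y => (f y).im) ((Complex.imCLM : ℂ →L[ℝ] ℝ).comp f') x :=
    (Complex.imCLM.hasFDerivAt).comp x hf
  have h3 := (h1.mul h1).add (h2.mul h2)
  have heq : (fun y => ‖f y‖ ^ 2) = fun y => (f y).re * (f y).re + (f y).im * (f y).im := by
    funext y
    rw [← Complex.normSq_apply, Complex.sq_norm]
  rw [heq]
  refine h3.congr_fderiv ?_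
  ext v
  simp
  ring

lemma split_m (z w u : ℂ) (s t : ℝ) (h : z - (s:ℂ)*w + Complex.I*(t:ℂ)*u = 0) :
    z.re = s*w.re + t*u.im ∧ z.im = s*w.im - t*u.re := by
  have h1 := congrArg Complex.re h
  have h2 := congrArg Complex.im h
  simp [Complex.mul_re, Complex.mul_im] at h1 h2
  constructor <;> linarith

lemma split_ph (z w : ℂ) (s : ℝ) (h : z - (s:ℂ)*w = 0) :
    z.re = s*w.re ∧ z.im = s*w.im := by
  have h1 := congrArg Complex.re h
  have h2 := congrArg Complex.im h
  simp [Complex.mul_re, Complex.mul_im] at h1 h2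
  constructor <;> linarith

lemma pdR_currentJ (X0 X1 : ℝ) (ψ : ℝ → ℝ → ℝ → (Fin 6 → ℝ) → ℂ) (μ ν κ : ℕ)
    (x : Fin 6 → ℝ)
    (hd : ∀ ς₀ ∈ ({-1,1} : Finset ℝ), ∀ ς₁ ∈ ({-1,1} : Finset ℝ), ∀ ς₂ ∈ ({-1,1} : Finset ℝ),
      DifferentiableAt ℝ (ψ ς₀ ς₁ ς₂) x) (i : Fin 6) :
    pdR i (currentJ X0 X1 ψ μ ν κ) x =
      (1/4) * ∑ ς₀ ∈ ({-1,1} : Finset ℝ), ∑ ς₁ ∈ ({-1,1} : Finset ℝ), ∑ ς₂ ∈ ({-1,1} : Finset ℝ),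
        (X0 + ς₀ * X1) * sgnpow μ ς₀ * sgnpow ν ς₁ * sgnpow κ ς₂ *
          (2 * ((ψ ς₀ ς₁ ς₂ x).re * (pdC i (ψ ς₀ ς₁ ς₂) x).re +
                (ψ ς₀ ς₁ ς₂ x).im * (pdC i (ψ ς₀ ς₁ ς₂) x).im)) := by
  have key : HasFDerivAt (currentJ X0 X1 ψ μ ν κ)
      ((1/4 : ℝ) • ∑ ς₀ ∈ ({-1,1} : Finset ℝ), ∑ ς₁ ∈ ({-1,1} : Finset ℝ),
          ∑ ς₂ ∈ ({-1,1} : Finset ℝ),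
        ((X0 + ς₀ * X1) * sgnpow μ ς₀ * sgnpow ν ς₁ * sgnpow κ ς₂) •
          ((2 * (ψ ς₀ ς₁ ς₂ x).re) •
              ((Complex.reCLM : ℂ →L[ℝ] ℝ).comp (fderiv ℝ (ψ ς₀ ς₁ ς₂) x)) +
           (2 * (ψ ς₀ ς₁ ς₂ x).im) •
              ((Complex.imCLM : ℂ →L[ℝ] ℝ).comp (fderiv ℝ (ψ ς₀ ς₁ ς₂) x)))) x := by
    unfold currentJ
    apply HasFDerivAt.const_mul
    apply HasFDerivAt.fun_sum; intro ς₀ h0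
    apply HasFDerivAt.fun_sum; intro ς₁ h1
    apply HasFDerivAt.fun_sum; intro ς₂ h2
    exact (hasFDerivAt_norm_sq ((hd ς₀ h0 ς₁ h1 ς₂ h2).hasFDerivAt)).const_mul _
  rw [pdR, key.fderiv]
  simp only [ContinuousLinearMap.smul_apply, ContinuousLinearMap.sum_apply,
    ContinuousLinearMap.add_apply, ContinuousLinearMap.coe_comp', Function.comp_apply,
    Complex.reCLM_apply, Complex.imCLM_apply, smul_eq_mul, pdC]
  congr 1
  refine Finset.sum_congr rfl fun ς₀ _ => Finset.sum_congr rfl fun ς₁ _ =>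
    Finset.sum_congr rfl fun ς₂ _ => ?_
  ring


lemma sgnpow_zero (s : ℝ) : sgnpow 0 s = 1 := rfl
lemma sgnpow_one (s : ℝ) : sgnpow 1 s = -s := rfl

set_option maxHeartbeats 1000000 in
/-- If the eight components are `C¹` on an open set `U ⊆ ℝ⁶` and satisfy the
free multi-time equations there, then the current `j_X` is jointly conserved on `U`. -/
theorem current_joint_conservation
    (hbar m_e ω : ℝ) (hhbar : 0 < hbar) (hm : 0 ≤ m_e) (hω : ω = m_e / hbar)
    (X0 X1 : ℝ)
    (U : Set (Fin 6 → ℝ)) (hU : IsOpen U)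
    (ψ : ℝ → ℝ → ℝ → (Fin 6 → ℝ) → ℂ)
    (hreg : ∀ ς₀ ∈ ({-1, 1} : Set ℝ), ∀ ς₁ ∈ ({-1, 1} : Set ℝ), ∀ ς₂ ∈ ({-1, 1} : Set ℝ),
      ContDiffOn ℝ 1 (ψ ς₀ ς₁ ς₂) U)
    (heq_ph : ∀ ς₀ ∈ ({-1, 1} : Set ℝ), ∀ ς₁ ∈ ({-1, 1} : Set ℝ), ∀ ς₂ ∈ ({-1, 1} : Set ℝ),
      ∀ x ∈ U, pdC 0 (ψ ς₀ ς₁ ς₂) x - (ς₀ : ℂ) * pdC 1 (ψ ς₀ ς₁ ς₂) x = 0)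
    (heq_e1 : ∀ ς₀ ∈ ({-1, 1} : Set ℝ), ∀ ς₁ ∈ ({-1, 1} : Set ℝ), ∀ ς₂ ∈ ({-1, 1} : Set ℝ),
      ∀ x ∈ U, pdC 2 (ψ ς₀ ς₁ ς₂) x - (ς₁ : ℂ) * pdC 3 (ψ ς₀ ς₁ ς₂) x
        + Complex.I * (ω : ℂ) * ψ ς₀ (-ς₁) ς₂ x = 0)
    (heq_e2 : ∀ ς₀ ∈ ({-1, 1} : Set ℝ), ∀ ς₁ ∈ ({-1, 1} : Set ℝ), ∀ ς₂ ∈ ({-1, 1} : Set ℝ),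
      ∀ x ∈ U, pdC 4 (ψ ς₀ ς₁ ς₂) x - (ς₂ : ℂ) * pdC 5 (ψ ς₀ ς₁ ς₂) x
        + Complex.I * (ω : ℂ) * ψ ς₀ ς₁ (-ς₂) x = 0) :
    (∀ ν ∈ ({0, 1} : Set ℕ), ∀ κ ∈ ({0, 1} : Set ℕ), ∀ x ∈ U,
        pdR 0 (currentJ X0 X1 ψ 0 ν κ) x + pdR 1 (currentJ X0 X1 ψ 1 ν κ) x = 0) ∧
    (∀ μ ∈ ({0, 1} : Set ℕ), ∀ κ ∈ ({0, 1} : Set ℕ), ∀ x ∈ U,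
        pdR 2 (currentJ X0 X1 ψ μ 0 κ) x + pdR 3 (currentJ X0 X1 ψ μ 1 κ) x = 0) ∧
    (∀ μ ∈ ({0, 1} : Set ℕ), ∀ ν ∈ ({0, 1} : Set ℕ), ∀ x ∈ U,
        pdR 4 (currentJ X0 X1 ψ μ ν 0) x + pdR 5 (currentJ X0 X1 ψ μ ν 1) x = 0) := by
  have hd : ∀ x ∈ U, ∀ ς₀ ∈ ({-1,1} : Finset ℝ), ∀ ς₁ ∈ ({-1,1} : Finset ℝ),
      ∀ ς₂ ∈ ({-1,1} : Finset ℝ), DifferentiableAt ℝ (ψ ς₀ ς₁ ς₂) x := by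
    intro x hx ς₀ h0 ς₁ h1 ς₂ h2
    exact ((hreg ς₀ (by simpa using h0) ς₁ (by simpa using h1) ς₂
      (by simpa using h2)).differentiableOn one_ne_zero).differentiableAt (hU.mem_nhds hx)
  have hne : (-1 : ℝ) ≠ 1 := by norm_num
  refine ⟨?_, ?_, ?_⟩
  · intro ν hν κ hκ x hx
    rw [pdR_currentJ X0 X1 ψ 0 ν κ x (hd x hx) 0, pdR_currentJ X0 X1 ψ 1 ν κ x (hd x hx) 1,
      ← mul_add, ← Finset.sum_add_distrib]
    refine mul_eq_zero_of_right _ (Finset.sum_eq_zero fun ς₀ h0 => ?_)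
    rw [← Finset.sum_add_distrib]
    refine Finset.sum_eq_zero fun ς₁ h1 => ?_
    rw [← Finset.sum_add_distrib]
    refine Finset.sum_eq_zero fun ς₂ h2 => ?_
    have hs := split_ph _ _ _ (heq_ph ς₀ (by simpa using h0) ς₁ (by simpa using h1) ς₂
      (by simpa using h2) x hx)
    rw [hs.1, hs.2]
    simp only [sgnpow_zero, sgnpow_one]
    rcases (by simpa using h0 : ς₀ = -1 ∨ ς₀ = 1) with rfl | rfl <;> ring
  · intro μ hμ κ hκ x hx
    rw [pdR_currentJ X0 X1 ψ μ 0 κ x (hd x hx) 2, pdR_currentJ X0 X1 ψ μ 1 κ x (hd x hx) 3,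
      ← mul_add, ← Finset.sum_add_distrib]
    refine mul_eq_zero_of_right _ (Finset.sum_eq_zero fun ς₀ h0 => ?_)
    have hs : ∀ ς₁ ∈ ({-1,1} : Set ℝ), ∀ ς₂ ∈ ({-1,1} : Set ℝ),
        (pdC 2 (ψ ς₀ ς₁ ς₂) x).re = ς₁ * (pdC 3 (ψ ς₀ ς₁ ς₂) x).re + ω * (ψ ς₀ (-ς₁) ς₂ x).im ∧
        (pdC 2 (ψ ς₀ ς₁ ς₂) x).im = ς₁ * (pdC 3 (ψ ς₀ ς₁ ς₂) x).im - ω * (ψ ς₀ (-ς₁) ς₂ x).re :=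
      fun ς₁ h1 ς₂ h2 =>
        split_m _ _ _ _ _ (heq_e1 ς₀ (by simpa using h0) ς₁ h1 ς₂ h2 x hx)
    have B1 := hs (-1) (by simp) (-1) (by simp)
    have B2 := hs (-1) (by simp) 1 (by simp)
    have B3 := hs 1 (by simp) (-1) (by simp)
    have B4 := hs 1 (by simp) 1 (by simp)
    simp only [neg_neg] at B1 B2 B3 B4
    simp only [Finset.sum_pair hne]
    rw [B1.1, B1.2, B2.1, B2.2, B3.1, B3.2, B4.1, B4.2]
    simp only [sgnpow_zero, sgnpow_one]
    ring
  · intro μ hμ ν hν x hx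
    rw [pdR_currentJ X0 X1 ψ μ ν 0 x (hd x hx) 4, pdR_currentJ X0 X1 ψ μ ν 1 x (hd x hx) 5,
      ← mul_add, ← Finset.sum_add_distrib]
    refine mul_eq_zero_of_right _ (Finset.sum_eq_zero fun ς₀ h0 => ?_)
    rw [← Finset.sum_add_distrib]
    refine Finset.sum_eq_zero fun ς₁ h1 => ?_
    have hs : ∀ ς₂ ∈ ({-1,1} : Set ℝ),
        (pdC 4 (ψ ς₀ ς₁ ς₂) x).re = ς₂ * (pdC 5 (ψ ς₀ ς₁ ς₂) x).re + ω * (ψ ς₀ ς₁ (-ς₂) x).im ∧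
        (pdC 4 (ψ ς₀ ς₁ ς₂) x).im = ς₂ * (pdC 5 (ψ ς₀ ς₁ ς₂) x).im - ω * (ψ ς₀ ς₁ (-ς₂) x).re :=
      fun ς₂ h2 =>
        split_m _ _ _ _ _ (heq_e2 ς₀ (by simpa using h0) ς₁ (by simpa using h1) ς₂ h2 x hx)
    have B1 := hs (-1) (by simp)
    have B2 := hs 1 (by simp)
    simp only [neg_neg] at B1 B2
    simp only [Finset.sum_pair hne]
    rw [B1.1, B1.2, B2.1, B2.2]
    simp only [sgnpow_zero, sgnpow_one]
    ring
end
end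

section
/- Suppose the eight components ψ_{ς₀ς₁ς₂}(t, s_ph, s_e1, s_e2) are C¹ on an open subset of ℝ⁴ and satisfy the equal-time evolution equations there. Define j⁰ := Σ_{ς₀,ς₁,ς₂} |ψ_{ς₀ς₁ς₂}|², j¹ := Σ_{ς₁,ς₂} (|ψ_{(−1)ς₁ς₂}|² − |ψ_{(+1)ς₁ς₂}|²), j² := Σ_{ς₀,ς₂} (|ψ_{ς₀(−1)ς₂}|² − |ψ_{ς₀(+1)ς₂}|²), j³ := Σ_{ς₀,ς₁} (|ψ_{ς₀ς₁(−1)}|² − |ψ_{ς₀ς₁(+1)}|²). Then the continuity equation holds: ∂_t j⁰ + ∂_{s_ph} j¹ + ∂_{s_e1} j² + ∂_{s_e2} j³ = 0. -/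
open Complex

noncomputable section

/-- `j⁰`: the probability density. Coordinates on `ℝ⁴` are `(t, s_ph, s_e1, s_e2)`. -/
def j0 (ψ : ℝ → ℝ → ℝ → (Fin 4 → ℝ) → ℂ) (x : Fin 4 → ℝ) : ℝ :=
  ∑ ς₀ ∈ ({-1, 1} : Finset ℝ), ∑ ς₁ ∈ ({-1, 1} : Finset ℝ), ∑ ς₂ ∈ ({-1, 1} : Finset ℝ),
    ‖ψ ς₀ ς₁ ς₂ x‖ ^ 2

/-- `j¹`: the photonic current. -/
def j1 (ψ : ℝ → ℝ → ℝ → (Fin 4 → ℝ) → ℂ) (x : Fin 4 → ℝ) : ℝ :=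
  ∑ ς₁ ∈ ({-1, 1} : Finset ℝ), ∑ ς₂ ∈ ({-1, 1} : Finset ℝ),
    (‖ψ (-1) ς₁ ς₂ x‖ ^ 2 - ‖ψ 1 ς₁ ς₂ x‖ ^ 2)

/-- `j²`: the current of the first electron. -/
def j2 (ψ : ℝ → ℝ → ℝ → (Fin 4 → ℝ) → ℂ) (x : Fin 4 → ℝ) : ℝ :=
  ∑ ς₀ ∈ ({-1, 1} : Finset ℝ), ∑ ς₂ ∈ ({-1, 1} : Finset ℝ),
    (‖ψ ς₀ (-1) ς₂ x‖ ^ 2 - ‖ψ ς₀ 1 ς₂ x‖ ^ 2)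

/-- `j³`: the current of the second electron. -/
def j3 (ψ : ℝ → ℝ → ℝ → (Fin 4 → ℝ) → ℂ) (x : Fin 4 → ℝ) : ℝ :=
  ∑ ς₀ ∈ ({-1, 1} : Finset ℝ), ∑ ς₁ ∈ ({-1, 1} : Finset ℝ),
    (‖ψ ς₀ ς₁ (-1) x‖ ^ 2 - ‖ψ ς₀ ς₁ 1 x‖ ^ 2)


noncomputable def nsqD (f : (Fin 4 → ℝ) → ℂ) (x : Fin 4 → ℝ) : (Fin 4 → ℝ) →L[ℝ] ℝ :=
  (2 * (f x).re) • (Complex.reCLM.comp (fderiv ℝ f x)) +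
  (2 * (f x).im) • (Complex.imCLM.comp (fderiv ℝ f x))

lemma hasFDerivAt_nsq {f : (Fin 4 → ℝ) → ℂ} {x : Fin 4 → ℝ}
    (hf : DifferentiableAt ℝ f x) :
    HasFDerivAt (fun y => ‖f y‖ ^ 2) (nsqD f x) x := by
  have h := hf.hasFDerivAt
  have hre : HasFDerivAt (fun y => (f y).re) (Complex.reCLM.comp (fderiv ℝ f x)) x :=
    (Complex.reCLM.hasFDerivAt).comp x h
  have him : HasFDerivAt (fun y => (f y).im) (Complex.imCLM.comp (fderiv ℝ f x)) x :=
    (Complex.imCLM.hasFDerivAt).comp x h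
  have h2 := (hre.mul hre).add (him.mul him)
  have hfun : (fun y => ‖f y‖ ^ 2) = fun y => (f y).re * (f y).re + (f y).im * (f y).im := by
    funext y
    rw [← Complex.normSq_apply, ← Complex.sq_norm]
  rw [hfun]
  refine h2.congr_fderiv ?_
  ext v
  simp [nsqD]
  ring

lemma nsqD_apply (f : (Fin 4 → ℝ) → ℂ) (x : Fin 4 → ℝ) (i : Fin 4) :
    nsqD f x (Pi.single i 1) =
      2 * ((f x).re * (pdC i f x).re + (f x).im * (pdC i f x).im) := by
  simp [nsqD, pdC]
  ring

lemma pdR_of {f : (Fin 4 → ℝ) → ℝ} {L : (Fin 4 → ℝ) →L[ℝ] ℝ} {x : Fin 4 → ℝ}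
    (h : HasFDerivAt f L x) (i : Fin 4) : pdR i f x = L (Pi.single i 1) := by
  unfold pdR; rw [h.fderiv]

/-- If the eight components are `C¹` on an open set `U ⊆ ℝ⁴` and satisfy
the equal-time evolution equations there, then the continuity equation
`∂_t j⁰ + ∂_{s_ph} j¹ + ∂_{s_e1} j² + ∂_{s_e2} j³ = 0` holds on `U`. -/
theorem continuity_equation
    (hbar m_e ω : ℝ) (hhbar : 0 < hbar) (hm : 0 ≤ m_e) (hω : ω = m_e / hbar)
    (U : Set (Fin 4 → ℝ)) (hU : IsOpen U)
    (ψ : ℝ → ℝ → ℝ → (Fin 4 → ℝ) → ℂ)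
    (hreg : ∀ ς₀ ∈ ({-1, 1} : Set ℝ), ∀ ς₁ ∈ ({-1, 1} : Set ℝ), ∀ ς₂ ∈ ({-1, 1} : Set ℝ),
      ContDiffOn ℝ 1 (ψ ς₀ ς₁ ς₂) U)
    (heq : ∀ ς₀ ∈ ({-1, 1} : Set ℝ), ∀ ς₁ ∈ ({-1, 1} : Set ℝ), ∀ ς₂ ∈ ({-1, 1} : Set ℝ),
      ∀ x ∈ U,
        pdC 0 (ψ ς₀ ς₁ ς₂) x - (ς₀ : ℂ) * pdC 1 (ψ ς₀ ς₁ ς₂) x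
          - (ς₁ : ℂ) * pdC 2 (ψ ς₀ ς₁ ς₂) x - (ς₂ : ℂ) * pdC 3 (ψ ς₀ ς₁ ς₂) x
          + Complex.I * (ω : ℂ) * ψ ς₀ (-ς₁) ς₂ x
          + Complex.I * (ω : ℂ) * ψ ς₀ ς₁ (-ς₂) x = 0) :
    ∀ x ∈ U,
      pdR 0 (j0 ψ) x + pdR 1 (j1 ψ) x + pdR 2 (j2 ψ) x + pdR 3 (j3 ψ) x = 0 := by
  intro x hx
  have hne : (-1 : ℝ) ≠ 1 := by norm_num
  have hm1 : (-1 : ℝ) ∈ ({-1, 1} : Set ℝ) := Set.mem_insert _ _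
  have hp1 : (1 : ℝ) ∈ ({-1, 1} : Set ℝ) := Set.mem_insert_iff.mpr (Or.inr rfl)
  have key : ∀ s0 ∈ ({-1, 1} : Set ℝ), ∀ s1 ∈ ({-1, 1} : Set ℝ), ∀ s2 ∈ ({-1, 1} : Set ℝ),
      DifferentiableAt ℝ (ψ s0 s1 s2) x := fun s0 h0 s1 h1 s2 h2 =>
    ((hreg s0 h0 s1 h1 s2 h2).differentiableOn one_ne_zero).differentiableAt (hU.mem_nhds hx)
  have hmmm := hasFDerivAt_nsq (key _ hm1 _ hm1 _ hm1)
  have hmmp := hasFDerivAt_nsq (key _ hm1 _ hm1 _ hp1)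
  have hmpm := hasFDerivAt_nsq (key _ hm1 _ hp1 _ hm1)
  have hmpp := hasFDerivAt_nsq (key _ hm1 _ hp1 _ hp1)
  have hpmm := hasFDerivAt_nsq (key _ hp1 _ hm1 _ hm1)
  have hpmp := hasFDerivAt_nsq (key _ hp1 _ hm1 _ hp1)
  have hppm := hasFDerivAt_nsq (key _ hp1 _ hp1 _ hm1)
  have hppp := hasFDerivAt_nsq (key _ hp1 _ hp1 _ hp1)
  have ej0 : j0 ψ = fun y =>
      ((‖ψ (-1) (-1) (-1) y‖ ^ 2 + ‖ψ (-1) (-1) 1 y‖ ^ 2) + (‖ψ (-1) 1 (-1) y‖ ^ 2 + ‖ψ (-1) 1 1 y‖ ^ 2)) +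
      ((‖ψ 1 (-1) (-1) y‖ ^ 2 + ‖ψ 1 (-1) 1 y‖ ^ 2) + (‖ψ 1 1 (-1) y‖ ^ 2 + ‖ψ 1 1 1 y‖ ^ 2)) := by
    funext y; simp [j0, Finset.sum_pair hne]
  have H0 : HasFDerivAt (j0 ψ)
      (((nsqD (ψ (-1) (-1) (-1)) x + nsqD (ψ (-1) (-1) 1) x) + (nsqD (ψ (-1) 1 (-1)) x + nsqD (ψ (-1) 1 1) x)) +
       ((nsqD (ψ 1 (-1) (-1)) x + nsqD (ψ 1 (-1) 1) x) + (nsqD (ψ 1 1 (-1)) x + nsqD (ψ 1 1 1) x))) x := by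
    rw [ej0]
    exact ((hmmm.add hmmp).add (hmpm.add hmpp)).add ((hpmm.add hpmp).add (hppm.add hppp))
  have ej1 : j1 ψ = fun y =>
      ((‖ψ (-1) (-1) (-1) y‖ ^ 2 - ‖ψ 1 (-1) (-1) y‖ ^ 2) + (‖ψ (-1) (-1) 1 y‖ ^ 2 - ‖ψ 1 (-1) 1 y‖ ^ 2)) + ((‖ψ (-1) 1 (-1) y‖ ^ 2 - ‖ψ 1 1 (-1) y‖ ^ 2) + (‖ψ (-1) 1 1 y‖ ^ 2 - ‖ψ 1 1 1 y‖ ^ 2)) := by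
    funext y; simp [j1, Finset.sum_pair hne]
  have H1 : HasFDerivAt (j1 ψ)
      (((nsqD (ψ (-1) (-1) (-1)) x - nsqD (ψ 1 (-1) (-1)) x) + (nsqD (ψ (-1) (-1) 1) x - nsqD (ψ 1 (-1) 1) x)) + ((nsqD (ψ (-1) 1 (-1)) x - nsqD (ψ 1 1 (-1)) x) + (nsqD (ψ (-1) 1 1) x - nsqD (ψ 1 1 1) x))) x := by
    rw [ej1]
    exact ((hmmm.sub hpmm).add (hmmp.sub hpmp)).add ((hmpm.sub hppm).add (hmpp.sub hppp))
  have ej2 : j2 ψ = fun y =>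
      ((‖ψ (-1) (-1) (-1) y‖ ^ 2 - ‖ψ (-1) 1 (-1) y‖ ^ 2) + (‖ψ (-1) (-1) 1 y‖ ^ 2 - ‖ψ (-1) 1 1 y‖ ^ 2)) + ((‖ψ 1 (-1) (-1) y‖ ^ 2 - ‖ψ 1 1 (-1) y‖ ^ 2) + (‖ψ 1 (-1) 1 y‖ ^ 2 - ‖ψ 1 1 1 y‖ ^ 2)) := by
    funext y; simp [j2, Finset.sum_pair hne]
  have H2 : HasFDerivAt (j2 ψ)
      (((nsqD (ψ (-1) (-1) (-1)) x - nsqD (ψ (-1) 1 (-1)) x) + (nsqD (ψ (-1) (-1) 1) x - nsqD (ψ (-1) 1 1) x)) + ((nsqD (ψ 1 (-1) (-1)) x - nsqD (ψ 1 1 (-1)) x) + (nsqD (ψ 1 (-1) 1) x - nsqD (ψ 1 1 1) x))) x := by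
    rw [ej2]
    exact ((hmmm.sub hmpm).add (hmmp.sub hmpp)).add ((hpmm.sub hppm).add (hpmp.sub hppp))
  have ej3 : j3 ψ = fun y =>
      ((‖ψ (-1) (-1) (-1) y‖ ^ 2 - ‖ψ (-1) (-1) 1 y‖ ^ 2) + (‖ψ (-1) 1 (-1) y‖ ^ 2 - ‖ψ (-1) 1 1 y‖ ^ 2)) + ((‖ψ 1 (-1) (-1) y‖ ^ 2 - ‖ψ 1 (-1) 1 y‖ ^ 2) + (‖ψ 1 1 (-1) y‖ ^ 2 - ‖ψ 1 1 1 y‖ ^ 2)) := by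
    funext y; simp [j3, Finset.sum_pair hne]
  have H3 : HasFDerivAt (j3 ψ)
      (((nsqD (ψ (-1) (-1) (-1)) x - nsqD (ψ (-1) (-1) 1) x) + (nsqD (ψ (-1) 1 (-1)) x - nsqD (ψ (-1) 1 1) x)) + ((nsqD (ψ 1 (-1) (-1)) x - nsqD (ψ 1 (-1) 1) x) + (nsqD (ψ 1 1 (-1)) x - nsqD (ψ 1 1 1) x))) x := by
    rw [ej3]
    exact ((hmmm.sub hmmp).add (hmpm.sub hmpp)).add ((hpmm.sub hpmp).add (hppm.sub hppp))
  have Emmm := heq (-1) hm1 (-1) hm1 (-1) hm1 x hx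
  have Emmp := heq (-1) hm1 (-1) hm1 1 hp1 x hx
  have Empm := heq (-1) hm1 1 hp1 (-1) hm1 x hx
  have Empp := heq (-1) hm1 1 hp1 1 hp1 x hx
  have Epmm := heq 1 hp1 (-1) hm1 (-1) hm1 x hx
  have Epmp := heq 1 hp1 (-1) hm1 1 hp1 x hx
  have Eppm := heq 1 hp1 1 hp1 (-1) hm1 x hx
  have Eppp := heq 1 hp1 1 hp1 1 hp1 x hx
  simp only [neg_neg] at Emmm Emmp Empm Empp Epmm Epmp Eppm Eppp
  rw [Complex.ext_iff] at Emmm Emmp Empm Empp Epmm Epmp Eppm Eppp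
  simp only [Complex.add_re, Complex.add_im, Complex.sub_re, Complex.sub_im, Complex.mul_re,
    Complex.mul_im, Complex.I_re, Complex.I_im, Complex.ofReal_re, Complex.ofReal_im,
    Complex.zero_re, Complex.zero_im, Complex.neg_re, Complex.neg_im, Complex.ofReal_neg,
    Complex.ofReal_one, Complex.one_re, Complex.one_im] at Emmm Emmp Empm Empp Epmm Epmp Eppm Eppp
  rw [pdR_of H0 0, pdR_of H1 1, pdR_of H2 2, pdR_of H3 3]
  simp only [ContinuousLinearMap.add_apply, ContinuousLinearMap.sub_apply, nsqD_apply]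
  linear_combination
    (2 * (ψ (-1) (-1) (-1) x).re) * Emmm.1 + (2 * (ψ (-1) (-1) (-1) x).im) * Emmm.2 +
    (2 * (ψ (-1) (-1) 1 x).re) * Emmp.1 + (2 * (ψ (-1) (-1) 1 x).im) * Emmp.2 +
    (2 * (ψ (-1) 1 (-1) x).re) * Empm.1 + (2 * (ψ (-1) 1 (-1) x).im) * Empm.2 +
    (2 * (ψ (-1) 1 1 x).re) * Empp.1 + (2 * (ψ (-1) 1 1 x).im) * Empp.2 +
    (2 * (ψ 1 (-1) (-1) x).re) * Epmm.1 + (2 * (ψ 1 (-1) (-1) x).im) * Epmm.2 +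
    (2 * (ψ 1 (-1) 1 x).re) * Epmp.1 + (2 * (ψ 1 (-1) 1 x).im) * Epmp.2 +
    (2 * (ψ 1 1 (-1) x).re) * Eppm.1 + (2 * (ψ 1 1 (-1) x).im) * Eppm.2 +
    (2 * (ψ 1 1 1 x).re) * Eppp.1 + (2 * (ψ 1 1 1 x).im) * Eppp.2
end
end

section
/- Let μ : [0,∞) → [0,1] be continuous and θ₁, θ₂ ∈ [0, 2π). Suppose Ψ = (ψ_{ς₀ς₁ς₂}) is C¹ on [0,∞) × closure(S₁), satisfies the equal-time evolution equations on (0,∞) × S₁ and the leaky boundary conditions on C₁ and C₂, and for every bounded time interval has compact spatial support. Then the total probability is non-increasing: for all 0 ≤ t₁ ≤ t₂, ∫_{S₁} |Ψ(t₂, ·)|² ≤ ∫_{S₁} |Ψ(t₁, ·)|², where |Ψ|² := Σ_{ς₀,ς₁,ς₂} |ψ_{ς₀ς₁ς₂}|². -/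
open Complex MeasureTheory

noncomputable section

/-- The spatial domain `S₁ = {(s_ph, s_e1, s_e2) : s_e1 < s_ph < s_e2}`;
coordinates are `p 0 = s_ph`, `p 1 = s_e1`, `p 2 = s_e2`. -/
def S1 : Set (Fin 3 → ℝ) := {p | p 1 < p 0 ∧ p 0 < p 2}

/-- Spacetime point `(t, s_ph, s_e1, s_e2)` from a time `t` and spatial point `p`. -/
def pt (t : ℝ) (p : Fin 3 → ℝ) : Fin 4 → ℝ := ![t, p 0, p 1, p 2]

/-- The spatial part of a spacetime point. -/
def sp (x : Fin 4 → ℝ) : Fin 3 → ℝ := ![x 1, x 2, x 3]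

/-- The probability density `Σ_{ς₀,ς₁,ς₂} |ψ_{ς₀ς₁ς₂}|²` at time `t`, spatial point `p`. -/
def totD (ψ : ℝ → ℝ → ℝ → (Fin 4 → ℝ) → ℂ) (t : ℝ) (p : Fin 3 → ℝ) : ℝ :=
  ∑ ς₀ ∈ ({-1, 1} : Finset ℝ), ∑ ς₁ ∈ ({-1, 1} : Finset ℝ), ∑ ς₂ ∈ ({-1, 1} : Finset ℝ),
    ‖ψ ς₀ ς₁ ς₂ (pt t p)‖ ^ 2

/-! ### Auxiliary definitions -/

def Pj (i : Fin 4) : (Fin 4 → ℝ) →L[ℝ] ℝ := ContinuousLinearMap.proj i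

/-- the linear change of variables `(t,u,v,w) ↦ (t,u,u-v,u+w)`. -/
def Amap : (Fin 4 → ℝ) →L[ℝ] (Fin 4 → ℝ) :=
  ContinuousLinearMap.pi ![Pj 0, Pj 1, Pj 1 - Pj 2, Pj 1 + Pj 3]

lemma Amap_apply (x : Fin 4 → ℝ) : Amap x = ![x 0, x 1, x 1 - x 2, x 1 + x 3] := by
  funext i
  fin_cases i <;>
    simp [Amap, Pj, ContinuousLinearMap.pi_apply, ContinuousLinearMap.proj_apply]

def cf : Fin 4 → ℝ → ℝ → ℝ → ℝ := fun i a b c => ![(-1:ℝ), a, a - b, c - a] i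

def Gc (ψ : ℝ → ℝ → ℝ → (Fin 4 → ℝ) → ℂ) (a b c : ℝ) (x : Fin 4 → ℝ) :
    (Fin 4 → ℝ) →L[ℝ] ℂ :=
  (fderiv ℝ (ψ a b c) (Amap x)).comp (Amap : (Fin 4 → ℝ) →L[ℝ] (Fin 4 → ℝ))

def Lc (ψ : ℝ → ℝ → ℝ → (Fin 4 → ℝ) → ℂ) (a b c : ℝ) (x : Fin 4 → ℝ) :
    (Fin 4 → ℝ) →L[ℝ] ℝ :=
  (2*(ψ a b c (Amap x)).re) • (Complex.reCLM.comp (Gc ψ a b c x)) +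
  (2*(ψ a b c (Amap x)).im) • (Complex.imCLM.comp (Gc ψ a b c x))

/-- the components of the spacetime flux vector field, in the new coordinates. -/
def ff (ψ : ℝ → ℝ → ℝ → (Fin 4 → ℝ) → ℂ) (i : Fin 4) (x : Fin 4 → ℝ) : ℝ :=
  ∑ a ∈ ({-1, 1} : Finset ℝ), ∑ b ∈ ({-1, 1} : Finset ℝ), ∑ c ∈ ({-1, 1} : Finset ℝ),
    cf i a b c * ‖ψ a b c (Amap x)‖ ^ 2

/-- its derivative. -/
def fd (ψ : ℝ → ℝ → ℝ → (Fin 4 → ℝ) → ℂ) (i : Fin 4) (x : Fin 4 → ℝ) :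
    (Fin 4 → ℝ) →L[ℝ] ℝ :=
  ∑ a ∈ ({-1, 1} : Finset ℝ), ∑ b ∈ ({-1, 1} : Finset ℝ), ∑ c ∈ ({-1, 1} : Finset ℝ),
    cf i a b c • Lc ψ a b c x

lemma Amap_single0 : Amap (Pi.single (0 : Fin 4) (1:ℝ)) = Pi.single (0 : Fin 4) (1:ℝ) := by
  rw [Amap_apply]; funext j; fin_cases j <;> simp

lemma Amap_single1 : Amap (Pi.single (1 : Fin 4) (1:ℝ)) =
    Pi.single (1 : Fin 4) (1:ℝ) + Pi.single (2 : Fin 4) (1:ℝ) + Pi.single (3 : Fin 4) (1:ℝ) := by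
  rw [Amap_apply]; funext j; fin_cases j <;> simp [Pi.single_apply]

lemma Amap_single2 : Amap (Pi.single (2 : Fin 4) (1:ℝ)) = -Pi.single (2 : Fin 4) (1:ℝ) := by
  rw [Amap_apply]; funext j; fin_cases j <;> simp [Pi.single_apply]

lemma Amap_single3 : Amap (Pi.single (3 : Fin 4) (1:ℝ)) = Pi.single (3 : Fin 4) (1:ℝ) := by
  rw [Amap_apply]; funext j; fin_cases j <;> simp [Pi.single_apply]

lemma gv0 (ψ : ℝ → ℝ → ℝ → (Fin 4 → ℝ) → ℂ) (a b c : ℝ) (x : Fin 4 → ℝ) :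
    Gc ψ a b c x (Pi.single (0 : Fin 4) 1) = pdC 0 (ψ a b c) (Amap x) := by
  simp [Gc, Amap_single0, pdC]

lemma gv1 (ψ : ℝ → ℝ → ℝ → (Fin 4 → ℝ) → ℂ) (a b c : ℝ) (x : Fin 4 → ℝ) :
    Gc ψ a b c x (Pi.single (1 : Fin 4) 1) =
      pdC 1 (ψ a b c) (Amap x) + pdC 2 (ψ a b c) (Amap x) + pdC 3 (ψ a b c) (Amap x) := by
  simp [Gc, Amap_single1, pdC]

lemma gv2 (ψ : ℝ → ℝ → ℝ → (Fin 4 → ℝ) → ℂ) (a b c : ℝ) (x : Fin 4 → ℝ) :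
    Gc ψ a b c x (Pi.single (2 : Fin 4) 1) = -pdC 2 (ψ a b c) (Amap x) := by
  simp [Gc, Amap_single2, pdC]

lemma gv3 (ψ : ℝ → ℝ → ℝ → (Fin 4 → ℝ) → ℂ) (a b c : ℝ) (x : Fin 4 → ℝ) :
    Gc ψ a b c x (Pi.single (3 : Fin 4) 1) = pdC 3 (ψ a b c) (Amap x) := by
  simp [Gc, Amap_single3, pdC]

lemma div_zero_at (ψ : ℝ → ℝ → ℝ → (Fin 4 → ℝ) → ℂ) (ω : ℝ) (x : Fin 4 → ℝ)
    (E : ∀ a : ℝ, a = -1 ∨ a = 1 → ∀ b : ℝ, b = -1 ∨ b = 1 → ∀ c : ℝ, c = -1 ∨ c = 1 →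
      pdC 0 (ψ a b c) (Amap x) - (a : ℂ) * pdC 1 (ψ a b c) (Amap x)
        - (b : ℂ) * pdC 2 (ψ a b c) (Amap x) - (c : ℂ) * pdC 3 (ψ a b c) (Amap x)
        + Complex.I * (ω : ℂ) * ψ a (-b) c (Amap x)
        + Complex.I * (ω : ℂ) * ψ a b (-c) (Amap x) = 0) :
    ∑ i : Fin 4, fd ψ i x (Pi.single i 1) = 0 := by
  have Eppp := E 1 (Or.inr rfl) 1 (Or.inr rfl) 1 (Or.inr rfl)
  have Eppm := E 1 (Or.inr rfl) 1 (Or.inr rfl) (-1) (Or.inl rfl)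
  have Epmp := E 1 (Or.inr rfl) (-1) (Or.inl rfl) 1 (Or.inr rfl)
  have Epmm := E 1 (Or.inr rfl) (-1) (Or.inl rfl) (-1) (Or.inl rfl)
  have Empp := E (-1) (Or.inl rfl) 1 (Or.inr rfl) 1 (Or.inr rfl)
  have Empm := E (-1) (Or.inl rfl) 1 (Or.inr rfl) (-1) (Or.inl rfl)
  have Emmp := E (-1) (Or.inl rfl) (-1) (Or.inl rfl) 1 (Or.inr rfl)
  have Emmm := E (-1) (Or.inl rfl) (-1) (Or.inl rfl) (-1) (Or.inl rfl)
  norm_num at Epmp Epmm Emmp Emmm Eppm Empm Empp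
  have Epppre := congrArg Complex.re Eppp
  have Epppim := congrArg Complex.im Eppp
  have Eppmre := congrArg Complex.re Eppm
  have Eppmim := congrArg Complex.im Eppm
  have Epmpre := congrArg Complex.re Epmp
  have Epmpim := congrArg Complex.im Epmp
  have Epmmre := congrArg Complex.re Epmm
  have Epmmim := congrArg Complex.im Epmm
  have Emppre := congrArg Complex.re Empp
  have Emppim := congrArg Complex.im Empp
  have Empmre := congrArg Complex.re Empm
  have Empmim := congrArg Complex.im Empm
  have Emmpre := congrArg Complex.re Emmp
  have Emmpim := congrArg Complex.im Emmp
  have Emmmre := congrArg Complex.re Emmm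
  have Emmmim := congrArg Complex.im Emmm
  simp only [Complex.add_re, Complex.add_im, Complex.sub_re, Complex.sub_im, Complex.mul_re,
    Complex.mul_im, Complex.I_re, Complex.I_im, Complex.ofReal_re, Complex.ofReal_im,
    Complex.zero_re, Complex.zero_im, Complex.neg_re, Complex.neg_im, Complex.one_re,
    Complex.one_im] at Epppre Epppim Eppmre Eppmim Epmpre Epmpim Epmmre Epmmim Emppre Emppim Empmre Empmim Emmpre Emmpim Emmmre Emmmim
  simp only [fd, Finset.sum_pair (show (-1:ℝ) ≠ 1 by norm_num), Fin.sum_univ_four,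
    ContinuousLinearMap.add_apply, ContinuousLinearMap.smul_apply, Lc,
    ContinuousLinearMap.coe_comp', Function.comp_apply, Complex.reCLM_apply,
    Complex.imCLM_apply, gv0, gv1, gv2, gv3, cf, smul_eq_mul]
  simp only [Complex.add_re, Complex.add_im, Complex.neg_re, Complex.neg_im,
    Matrix.cons_val_zero, Matrix.cons_val_one, Matrix.head_cons, Matrix.cons_val_two,
    Matrix.tail_cons, Matrix.cons_val_three]
  linear_combination ((-2)*(ψ 1 1 1 (Amap x)).re) * Epppre + ((-2)*(ψ 1 1 1 (Amap x)).im) * Epppim + ((-2)*(ψ 1 1 (-1) (Amap x)).re) * Eppmre + ((-2)*(ψ 1 1 (-1) (Amap x)).im) * Eppmim + ((-2)*(ψ 1 (-1) 1 (Amap x)).re) * Epmpre + ((-2)*(ψ 1 (-1) 1 (Amap x)).im) * Epmpim + ((-2)*(ψ 1 (-1) (-1) (Amap x)).re) * Epmmre + ((-2)*(ψ 1 (-1) (-1) (Amap x)).im) * Epmmim + ((-2)*(ψ (-1) 1 1 (Amap x)).re) * Emppre + ((-2)*(ψ (-1) 1 1 (Amap x)).im) * Emppim + ((-2)*(ψ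 (-1) 1 (-1) (Amap x)).re) * Empmre + ((-2)*(ψ (-1) 1 (-1) (Amap x)).im) * Empmim + ((-2)*(ψ (-1) (-1) 1 (Amap x)).re) * Emmpre + ((-2)*(ψ (-1) (-1) 1 (Amap x)).im) * Emmpim + ((-2)*(ψ (-1) (-1) (-1) (Amap x)).re) * Emmmre + ((-2)*(ψ (-1) (-1) (-1) (Amap x)).im) * Emmmim

lemma normsq_hasFDerivAt (ψ : ℝ → ℝ → ℝ → (Fin 4 → ℝ) → ℂ) (a b c : ℝ) (x : Fin 4 → ℝ)
    (hD : DifferentiableAt ℝ (ψ a b c) (Amap x)) :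
    HasFDerivAt (fun y => ‖ψ a b c (Amap y)‖ ^ 2) (Lc ψ a b c x) x := by
  have hG : HasFDerivAt (fun y => ψ a b c (Amap y)) (Gc ψ a b c x) x :=
    hD.hasFDerivAt.comp x (Amap.hasFDerivAt)
  have hre : HasFDerivAt (fun y => (ψ a b c (Amap y)).re)
      (Complex.reCLM.comp (Gc ψ a b c x)) x := (Complex.reCLM.hasFDerivAt).comp x hG
  have him : HasFDerivAt (fun y => (ψ a b c (Amap y)).im)
      (Complex.imCLM.comp (Gc ψ a b c x)) x := (Complex.imCLM.hasFDerivAt).comp x hG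
  have hmul := (hre.mul hre).add (him.mul him)
  have hfun : (fun y => ‖ψ a b c (Amap y)‖ ^ 2)
      = fun y => (ψ a b c (Amap y)).re * (ψ a b c (Amap y)).re
        + (ψ a b c (Amap y)).im * (ψ a b c (Amap y)).im := by
    funext y
    rw [Complex.sq_norm, Complex.normSq_apply]
  rw [hfun]
  refine HasFDerivAt.congr_fderiv hmul ?_
  unfold Lc
  module

lemma ff_hasFDerivAt (ψ : ℝ → ℝ → ℝ → (Fin 4 → ℝ) → ℂ) (i : Fin 4) (x : Fin 4 → ℝ)
    (hD : ∀ a ∈ ({-1, 1} : Finset ℝ), ∀ b ∈ ({-1, 1} : Finset ℝ), ∀ c ∈ ({-1, 1} : Finset ℝ),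
      DifferentiableAt ℝ (ψ a b c) (Amap x)) :
    HasFDerivAt (ff ψ i) (fd ψ i x) x := by
  unfold ff fd
  apply HasFDerivAt.fun_sum
  intro a ha
  apply HasFDerivAt.fun_sum
  intro b hb
  apply HasFDerivAt.fun_sum
  intro c hc
  exact (normsq_hasFDerivAt ψ a b c x (hD a ha b hb c hc)).const_mul _

lemma closure_S1 : closure S1 = {p : Fin 3 → ℝ | p 1 ≤ p 0 ∧ p 0 ≤ p 2} := by
  apply Set.Subset.antisymm
  · apply closure_minimal
    · rintro p ⟨h1, h2⟩; exact ⟨h1.le, h2.le⟩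
    · exact (isClosed_le (continuous_apply 1) (continuous_apply 0)).inter
        (isClosed_le (continuous_apply 0) (continuous_apply 2))
  · rintro p ⟨h1, h2⟩
    have htt : Filter.Tendsto (fun ε : ℝ => fun i => p i + ε * ![0, -1, 1] i)
        (nhdsWithin 0 (Set.Ioi 0)) (nhds p) := by
      apply Filter.Tendsto.mono_left _ nhdsWithin_le_nhds
      have hc : Continuous (fun ε : ℝ => fun i => p i + ε * ![(0:ℝ), -1, 1] i) := by
        apply continuous_pi; intro i
        exact continuous_const.add (continuous_id.mul continuous_const)
      simpa using hc.tendsto 0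
    refine mem_closure_of_tendsto htt ?_
    filter_upwards [self_mem_nhdsWithin] with ε (hε : 0 < ε)
    constructor
    · show p 1 + ε * ![(0:ℝ),-1,1] 1 < p 0 + ε * ![(0:ℝ),-1,1] 0
      simp; nlinarith
    · show p 0 + ε * ![(0:ℝ),-1,1] 0 < p 2 + ε * ![(0:ℝ),-1,1] 2
      simp; nlinarith

def M3 : Matrix (Fin 3) (Fin 3) ℝ := !![1,0,0; 1,-1,0; 1,0,1]

lemma detM3 : M3.det = -1 := by simp [M3, Matrix.det_fin_three]

lemma Bl_apply (y : Fin 3 → ℝ) :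
    Matrix.toLin' M3 y = ![y 0, y 0 - y 1, y 0 + y 2] := by
  funext i
  fin_cases i <;>
    simp [M3, Matrix.toLin'_apply, Matrix.mulVec, dotProduct, Fin.sum_univ_three, Matrix.vecHead, Matrix.vecTail] <;> ring

lemma Bl_measurePreserving :
    MeasurePreserving (Matrix.toLin' M3) (volume : Measure (Fin 3 → ℝ)) volume := by
  constructor
  · exact (Matrix.toLin' M3).continuous_of_finiteDimensional.measurable
  · rw [Real.map_matrix_volume_pi_eq_smul_volume_pi (by rw [detM3]; norm_num)]
    simp [detM3]

lemma Bl_measurableEmbedding : MeasurableEmbedding (Matrix.toLin' M3) := by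
  have h : Invertible M3 := M3.invertibleOfIsUnitDet (by rw [detM3]; exact isUnit_one.neg)
  have e := (Matrix.toLinearEquiv' M3 h).toContinuousLinearEquiv.toHomeomorph.measurableEmbedding
  convert e using 1
  rfl

lemma hyperplane_null (i : Fin 3) (c : ℝ) : (volume : Measure (Fin 3 → ℝ)) {y | y i = c} = 0 := by
  rw [volume_pi]
  exact Measure.pi_hyperplane (fun _ : Fin 3 => (volume : Measure ℝ)) i c


set_option maxHeartbeats 4000000 in
/-- For a `C¹` solution of the equal-time evolution equations with the
leaky boundary conditions and compact spatial support, the total probability in `S₁`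
is non-increasing in time. -/
theorem leaky_probability_nonincreasing
    (hbar m_e ω : ℝ) (hhbar : 0 < hbar) (hm : 0 ≤ m_e) (hω : ω = m_e / hbar)
    (θ₁ θ₂ : ℝ) (hθ₁ : θ₁ ∈ Set.Ico 0 (2 * Real.pi)) (hθ₂ : θ₂ ∈ Set.Ico 0 (2 * Real.pi))
    (μ : ℝ → ℝ) (hμc : Continuous μ) (hμ01 : ∀ r, 0 ≤ r → μ r ∈ Set.Icc (0 : ℝ) 1)
    (ψ : ℝ → ℝ → ℝ → (Fin 4 → ℝ) → ℂ)
    -- `Ψ` is C¹ on `[0,∞) × closure S₁`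
    (hreg : ∀ ς₀ ∈ ({-1, 1} : Set ℝ), ∀ ς₁ ∈ ({-1, 1} : Set ℝ), ∀ ς₂ ∈ ({-1, 1} : Set ℝ),
      ContDiffOn ℝ 1 (ψ ς₀ ς₁ ς₂) {x : Fin 4 → ℝ | 0 ≤ x 0 ∧ sp x ∈ closure S1})
    -- equal-time evolution equations on `(0,∞) × S₁`
    (heq : ∀ ς₀ ∈ ({-1, 1} : Set ℝ), ∀ ς₁ ∈ ({-1, 1} : Set ℝ), ∀ ς₂ ∈ ({-1, 1} : Set ℝ),
      ∀ x : Fin 4 → ℝ, 0 < x 0 → sp x ∈ S1 →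
        pdC 0 (ψ ς₀ ς₁ ς₂) x - (ς₀ : ℂ) * pdC 1 (ψ ς₀ ς₁ ς₂) x
          - (ς₁ : ℂ) * pdC 2 (ψ ς₀ ς₁ ς₂) x - (ς₂ : ℂ) * pdC 3 (ψ ς₀ ς₁ ς₂) x
          + Complex.I * (ω : ℂ) * ψ ς₀ (-ς₁) ς₂ x
          + Complex.I * (ω : ℂ) * ψ ς₀ ς₁ (-ς₂) x = 0)
    -- leaky boundary condition on `C₁ = {s_e1 = s_ph < s_e2}`
    (hbc1 : ∀ ς₂ ∈ ({-1, 1} : Set ℝ), ∀ t : ℝ, 0 ≤ t → ∀ r b : ℝ, r < b →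
      ψ (-1) 1 ς₂ ![t, r, r, b]
        = Complex.exp (θ₁ * Complex.I) * ((μ |r - b| : ℝ) : ℂ) * ψ 1 (-1) ς₂ ![t, r, r, b])
    -- leaky boundary condition on `C₂ = {s_e1 < s_ph = s_e2}`
    (hbc2 : ∀ ς₁ ∈ ({-1, 1} : Set ℝ), ∀ t : ℝ, 0 ≤ t → ∀ a r : ℝ, a < r →
      ψ 1 ς₁ (-1) ![t, r, a, r]
        = Complex.exp (θ₂ * Complex.I) * ((μ |a - r| : ℝ) : ℂ) * ψ (-1) ς₁ 1 ![t, r, a, r])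
    -- compact spatial support on every bounded time interval
    (hsupp : ∀ T : ℝ, ∃ K : Set (Fin 3 → ℝ), IsCompact K ∧
      ∀ ς₀ ∈ ({-1, 1} : Set ℝ), ∀ ς₁ ∈ ({-1, 1} : Set ℝ), ∀ ς₂ ∈ ({-1, 1} : Set ℝ),
        ∀ t ∈ Set.Icc 0 T, ∀ p : Fin 3 → ℝ, p ∉ K → ψ ς₀ ς₁ ς₂ (pt t p) = 0) :
    ∀ t₁ t₂ : ℝ, 0 ≤ t₁ → t₁ ≤ t₂ →
      (∫ p in S1, totD ψ t₂ p) ≤ ∫ p in S1, totD ψ t₁ p := by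
  
  intro t₁ t₂ ht₁ h12
  classical
  have h1S : (1:ℝ) ∈ ({-1,1} : Set ℝ) := Or.inr rfl
  have hm1S : (-1:ℝ) ∈ ({-1,1} : Set ℝ) := Or.inl rfl
  have hsgn : ∀ a : ℝ, a ∈ ({-1,1} : Finset ℝ) → a ∈ ({-1,1} : Set ℝ) := by
    intro a ha; simpa using ha
  obtain ⟨K, hKc, hK0⟩ := hsupp t₂
  obtain ⟨M0, hM0⟩ := hKc.isBounded.subset_closedBall 0
  set M : ℝ := max M0 0 with hMdef
  have hMnn : (0:ℝ) ≤ M := le_max_right _ _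
  have hKM : ∀ p ∈ K, ∀ i, |p i| ≤ M := by
    intro p hp i
    have h1 : ‖p‖ ≤ M0 := by simpa using mem_closedBall_zero_iff.mp (hM0 hp)
    calc |p i| = ‖p i‖ := (Real.norm_eq_abs _).symm
      _ ≤ ‖p‖ := norm_le_pi_norm p i
      _ ≤ M := h1.trans (le_max_left _ _)
  set R : ℝ := 2*M+1 with hRdef
  have hMR : M < R := by simp only [hRdef]; linarith
  have hRpos : (0:ℝ) < R := by simp only [hRdef]; linarith
  have hzero : ∀ a ∈ ({-1,1} : Set ℝ), ∀ b ∈ ({-1,1} : Set ℝ), ∀ c ∈ ({-1,1} : Set ℝ),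
      ∀ t ∈ Set.Icc (0:ℝ) t₂, ∀ p : Fin 3 → ℝ, (∃ i, M < |p i|) → ψ a b c (pt t p) = 0 := by
    rintro a ha b hb c hc t ht p ⟨i, hi⟩
    refine hK0 a ha b hb c hc t ht p (fun hp => ?_)
    exact absurd (hKM p hp i) (not_le.mpr hi)
  -- the spacetime box
  have hab : (![t₁, -R, 0, 0] : Fin 4 → ℝ) ≤ ![t₂, R, R, R] := by
    intro i; fin_cases i <;> simp <;> linarith
  -- membership in the domain of regularity
  have hsppt : ∀ (t : ℝ) (p : Fin 3 → ℝ), sp (pt t p) = p := by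
    intro t p; funext i; fin_cases i <;> rfl
  have hmemD : ∀ x ∈ Set.Icc (![t₁, -R, 0, 0] : Fin 4 → ℝ) ![t₂, R, R, R],
      Amap x ∈ {x : Fin 4 → ℝ | 0 ≤ x 0 ∧ sp x ∈ closure S1} := by
    intro x hx
    obtain ⟨hl, hu⟩ := hx
    have h0 : t₁ ≤ x 0 := by simpa using hl 0
    have h2 : 0 ≤ x 2 := by simpa using hl 2
    have h3 : 0 ≤ x 3 := by simpa using hl 3
    constructor
    · rw [Amap_apply]; show 0 ≤ x 0; linarith
    · rw [Amap_apply, closure_S1]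
      show (sp ![x 0, x 1, x 1 - x 2, x 1 + x 3]) 1 ≤ _ ∧ _
      refine ⟨?_, ?_⟩ <;> · show (![_, _, _] : Fin 3 → ℝ) _ ≤ _; simp [sp]; linarith
  -- continuity of the vector field on the box
  have hCont8 : ∀ a ∈ ({-1,1} : Set ℝ), ∀ b ∈ ({-1,1} : Set ℝ), ∀ c ∈ ({-1,1} : Set ℝ),
      ContinuousOn (fun y => ψ a b c (Amap y))
        (Set.Icc (![t₁, -R, 0, 0] : Fin 4 → ℝ) ![t₂, R, R, R]) := by
    intro a ha b hb c hc
    exact ((hreg a ha b hb c hc).continuousOn).comp Amap.continuous.continuousOn hmemD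
  have Hc : ∀ i, ContinuousOn (ff ψ i)
      (Set.Icc (![t₁, -R, 0, 0] : Fin 4 → ℝ) ![t₂, R, R, R]) := by
    intro i
    unfold ff
    refine continuousOn_finset_sum _ (fun a ha => continuousOn_finset_sum _
      (fun b hb => continuousOn_finset_sum _ (fun c hc => ?_)))
    exact continuousOn_const.mul
      (((hCont8 a (hsgn a ha) b (hsgn b hb) c (hsgn c hc)).norm).pow 2)
  -- interior differentiability
  have hIoo : ∀ x ∈ (Set.pi Set.univ fun i =>
        Set.Ioo ((![t₁, -R, 0, 0] : Fin 4 → ℝ) i) ((![t₂, R, R, R] : Fin 4 → ℝ) i)),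
      0 < x 0 ∧ 0 < x 2 ∧ 0 < x 3 := by
    intro x hx
    have h0 := hx 0 (Set.mem_univ _)
    have h2 := hx 2 (Set.mem_univ _)
    have h3 := hx 3 (Set.mem_univ _)
    simp only [Matrix.cons_val_zero, Matrix.cons_val_one, Matrix.head_cons,
      Matrix.cons_val_two, Matrix.tail_cons, Matrix.cons_val_three] at h0 h2 h3
    exact ⟨lt_of_le_of_lt ht₁ h0.1, h2.1, h3.1⟩
  have hUopen : IsOpen {y : Fin 4 → ℝ | 0 < y 0 ∧ y 2 < y 1 ∧ y 1 < y 3} :=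
    ((isOpen_lt continuous_const (continuous_apply 0)).inter
      ((isOpen_lt (continuous_apply 2) (continuous_apply 1)).inter
        (isOpen_lt (continuous_apply 1) (continuous_apply 3))))
  have hUD : {y : Fin 4 → ℝ | 0 < y 0 ∧ y 2 < y 1 ∧ y 1 < y 3}
      ⊆ {x : Fin 4 → ℝ | 0 ≤ x 0 ∧ sp x ∈ closure S1} := by
    rintro y ⟨hy0, hy1, hy2⟩
    refine ⟨hy0.le, ?_⟩
    rw [closure_S1]
    exact ⟨hy1.le, hy2.le⟩
  have hdiffAt : ∀ x ∈ (Set.pi Set.univ fun i =>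
        Set.Ioo ((![t₁, -R, 0, 0] : Fin 4 → ℝ) i) ((![t₂, R, R, R] : Fin 4 → ℝ) i)),
      ∀ a ∈ ({-1,1} : Set ℝ), ∀ b ∈ ({-1,1} : Set ℝ), ∀ c ∈ ({-1,1} : Set ℝ),
      DifferentiableAt ℝ (ψ a b c) (Amap x) := by
    intro x hx a ha b hb c hc
    obtain ⟨h0, h2, h3⟩ := hIoo x hx
    have hmem : Amap x ∈ {y : Fin 4 → ℝ | 0 < y 0 ∧ y 2 < y 1 ∧ y 1 < y 3} := by
      rw [Amap_apply]
      refine ⟨by simpa using h0, ?_, ?_⟩ <;> simp <;> linarith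
    exact (((hreg a ha b hb c hc).differentiableOn one_ne_zero).mono hUD).differentiableAt
      (hUopen.mem_nhds hmem)
  have Hd : ∀ x ∈ (Set.pi Set.univ fun i =>
        Set.Ioo ((![t₁, -R, 0, 0] : Fin 4 → ℝ) i) ((![t₂, R, R, R] : Fin 4 → ℝ) i)) \ ∅,
      ∀ i, HasFDerivAt (ff ψ i) (fd ψ i x) x := by
    intro x hx i
    exact ff_hasFDerivAt ψ i x (fun a ha b hb c hc =>
      hdiffAt x hx.1 a (hsgn a ha) b (hsgn b hb) c (hsgn c hc))
  -- the divergence vanishes on the interior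
  have hdiv0 : ∀ x ∈ (Set.pi Set.univ fun i =>
        Set.Ioo ((![t₁, -R, 0, 0] : Fin 4 → ℝ) i) ((![t₂, R, R, R] : Fin 4 → ℝ) i)),
      ∑ i : Fin 4, fd ψ i x (Pi.single i 1) = 0 := by
    intro x hx
    obtain ⟨h0, h2, h3⟩ := hIoo x hx
    have h0' : 0 < (Amap x) 0 := by rw [Amap_apply]; simpa using h0
    have hS' : sp (Amap x) ∈ S1 := by
      rw [Amap_apply]
      constructor <;> · show (![_,_,_] : Fin 3 → ℝ) _ < _; simp [sp]; linarith
    exact div_zero_at ψ ω x (fun a ha b hb c hc => heq a ha b hb c hc (Amap x) h0' hS')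
  -- integrability of divergence and its vanishing integral
  have hnull : volume ((Set.Icc (![t₁, -R, 0, 0] : Fin 4 → ℝ) ![t₂, R, R, R]) \
      (Set.pi Set.univ fun i =>
        Set.Ioo ((![t₁, -R, 0, 0] : Fin 4 → ℝ) i) ((![t₂, R, R, R] : Fin 4 → ℝ) i))) = 0 := by
    have h : (Set.pi Set.univ fun i =>
        Set.Ioo ((![t₁, -R, 0, 0] : Fin 4 → ℝ) i) ((![t₂, R, R, R] : Fin 4 → ℝ) i))
        =ᵐ[volume] Set.Icc (![t₁, -R, 0, 0] : Fin 4 → ℝ) ![t₂, R, R, R] := by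
      rw [volume_pi]; exact Measure.univ_pi_Ioo_ae_eq_Icc
    exact (MeasureTheory.ae_eq_set.mp h).2
  have hae : (fun x => ∑ i : Fin 4, fd ψ i x (Pi.single i 1))
      =ᵐ[volume.restrict (Set.Icc (![t₁, -R, 0, 0] : Fin 4 → ℝ) ![t₂, R, R, R])]
      (fun _ => (0:ℝ)) := by
    rw [Filter.EventuallyEq, ae_restrict_iff' measurableSet_Icc]
    filter_upwards [measure_eq_zero_iff_ae_notMem.mp hnull] with x hxn hx
    have hxi : x ∈ (Set.pi Set.univ fun i =>
        Set.Ioo ((![t₁, -R, 0, 0] : Fin 4 → ℝ) i) ((![t₂, R, R, R] : Fin 4 → ℝ) i)) := by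
      by_contra hc
      exact hxn ⟨hx, hc⟩
    exact hdiv0 x hxi
  have Hi : IntegrableOn (fun x => ∑ i : Fin 4, fd ψ i x (Pi.single i 1))
      (Set.Icc (![t₁, -R, 0, 0] : Fin 4 → ℝ) ![t₂, R, R, R]) volume :=
    (integrable_zero _ _ _).congr hae.symm
  have hint0 : ∫ x in (Set.Icc (![t₁, -R, 0, 0] : Fin 4 → ℝ) ![t₂, R, R, R]),
      ∑ i : Fin 4, fd ψ i x (Pi.single i 1) = 0 := by
    rw [integral_congr_ae hae]; simp
  have key := MeasureTheory.integral_divergence_of_hasFDerivAt_off_countable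
    (n := 3) ![t₁, -R, 0, 0] ![t₂, R, R, R] hab (fun x i => ff ψ i x)
    (fun x => ContinuousLinearMap.pi fun i => fd ψ i x) ∅ Set.countable_empty
    (continuousOn_pi.2 Hc) (fun x hx => hasFDerivAt_pi.2 (Hd x hx))
    Hi
  simp only [ContinuousLinearMap.pi_apply] at key
  rw [hint0, Fin.sum_univ_four] at key
  have hcomp0a : (![t₁,-R,0,0] : Fin 4 → ℝ) ∘ Fin.succAbove 0 = ![-R,0,0] := by
    funext j; fin_cases j <;> rfl
  have hcomp0b : (![t₂,R,R,R] : Fin 4 → ℝ) ∘ Fin.succAbove 0 = ![R,R,R] := by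
    funext j; fin_cases j <;> rfl
  have hcomp1a : (![t₁,-R,0,0] : Fin 4 → ℝ) ∘ Fin.succAbove 1 = ![t₁,0,0] := by
    funext j; fin_cases j <;> rfl
  have hcomp1b : (![t₂,R,R,R] : Fin 4 → ℝ) ∘ Fin.succAbove 1 = ![t₂,R,R] := by
    funext j; fin_cases j <;> rfl
  have hcomp2a : (![t₁,-R,0,0] : Fin 4 → ℝ) ∘ Fin.succAbove 2 = ![t₁,-R,0] := by
    funext j; fin_cases j <;> rfl
  have hcomp2b : (![t₂,R,R,R] : Fin 4 → ℝ) ∘ Fin.succAbove 2 = ![t₂,R,R] := by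
    funext j; fin_cases j <;> rfl
  have hcomp3a : (![t₁,-R,0,0] : Fin 4 → ℝ) ∘ Fin.succAbove 3 = ![t₁,-R,0] := by
    funext j; fin_cases j <;> rfl
  have hcomp3b : (![t₂,R,R,R] : Fin 4 → ℝ) ∘ Fin.succAbove 3 = ![t₂,R,R] := by
    funext j; fin_cases j <;> rfl
  rw [hcomp0a, hcomp0b, hcomp1a, hcomp1b, hcomp2a, hcomp2b, hcomp3a, hcomp3b] at key
  simp only [Matrix.cons_val_zero, Matrix.cons_val_one, Matrix.head_cons,
    Matrix.cons_val_two, Matrix.tail_cons, Matrix.cons_val_three] at key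
  -- `key` is now the sum over the eight faces
  -- time faces
  have hface0 : ∀ t : ℝ, 0 ≤ t → t ≤ t₂ →
      (∫ y in Set.Icc (![-R,0,0] : Fin 3 → ℝ) ![R,R,R], ff ψ 0 (Fin.insertNth 0 t y))
        = -∫ p in S1, totD ψ t p := by
    intro t ht0 ht2
    have hffv : ∀ y : Fin 3 → ℝ, ff ψ 0 (Fin.insertNth 0 t y)
        = -totD ψ t (Matrix.toLin' M3 y) := by
      intro y
      have hins : Fin.insertNth 0 t y = ![t, y 0, y 1, y 2] := by
        funext j; fin_cases j <;> rfl
      have hA : Amap (Fin.insertNth 0 t y) = pt t (Matrix.toLin' M3 y) := by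
        rw [hins, Amap_apply, Bl_apply]; funext j; fin_cases j <;> simp [pt]
      unfold ff totD
      rw [hA]
      simp only [cf, Matrix.cons_val_zero, neg_mul, one_mul, Finset.sum_neg_distrib]
    rw [setIntegral_congr_fun measurableSet_Icc
      (g := fun y => -totD ψ t (Matrix.toLin' M3 y)) (fun y _ => hffv y), integral_neg]
    congr 1
    -- change of variables
    have hpre : (Matrix.toLin' M3) ⁻¹' S1 = {y : Fin 3 → ℝ | 0 < y 1 ∧ 0 < y 2} := by
      ext y
      simp only [Set.mem_preimage, S1, Set.mem_setOf_eq, Bl_apply, Matrix.cons_val_zero,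
        Matrix.cons_val_one, Matrix.head_cons, Matrix.cons_val_two, Matrix.tail_cons]
      constructor <;> rintro ⟨u, v⟩ <;> constructor <;> linarith
    have hPm : MeasurableSet {y : Fin 3 → ℝ | 0 < y 1 ∧ 0 < y 2} :=
      (measurableSet_lt measurable_const (measurable_pi_apply 1)).inter
        (measurableSet_lt measurable_const (measurable_pi_apply 2))
    have h1 : ∫ p in S1, totD ψ t p = ∫ y in {y : Fin 3 → ℝ | 0 < y 1 ∧ 0 < y 2},
        totD ψ t (Matrix.toLin' M3 y) := by
      rw [← hpre]
      exact (Bl_measurePreserving.setIntegral_preimage_emb Bl_measurableEmbedding _ _).symm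
    have hptc : Continuous (fun y : Fin 3 → ℝ => pt t (Matrix.toLin' M3 y)) := by
      have hfe : (fun y : Fin 3 → ℝ => pt t (Matrix.toLin' M3 y))
          = fun y => ![t, y 0, y 0 - y 1, y 0 + y 2] := by
        funext y; rw [Bl_apply]; funext j; fin_cases j <;> simp [pt]
      rw [hfe]
      refine continuous_pi (fun j => ?_)
      fin_cases j
      · exact continuous_const
      · exact continuous_apply 0
      · exact (continuous_apply 0).sub (continuous_apply 1)
      · exact (continuous_apply 0).add (continuous_apply 2)
    have hmaps : ∀ y : Fin 3 → ℝ, 0 ≤ y 1 → 0 ≤ y 2 →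
        pt t (Matrix.toLin' M3 y) ∈ {x : Fin 4 → ℝ | 0 ≤ x 0 ∧ sp x ∈ closure S1} := by
      intro y hy1 hy2
      constructor
      · show 0 ≤ pt t (Matrix.toLin' M3 y) 0
        simpa [pt] using ht0
      · rw [hsppt, closure_S1, Bl_apply]
        constructor
        · show (![y 0, y 0 - y 1, y 0 + y 2] : Fin 3 → ℝ) 1 ≤ _
          simp; linarith
        · show (![y 0, y 0 - y 1, y 0 + y 2] : Fin 3 → ℝ) 0 ≤ _
          simp; linarith
    have hGc : ContinuousOn (fun y => totD ψ t (Matrix.toLin' M3 y))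
        {y : Fin 3 → ℝ | 0 ≤ y 1 ∧ 0 ≤ y 2} := by
      unfold totD
      refine continuousOn_finset_sum _ (fun a ha => continuousOn_finset_sum _
        (fun b hb => continuousOn_finset_sum _ (fun c hc => ?_)))
      exact ((((hreg a (hsgn a ha) b (hsgn b hb) c (hsgn c hc)).continuousOn).comp
        hptc.continuousOn (fun y hy => hmaps y hy.1 hy.2)).norm).pow 2
    have hsubQ : Set.Icc (![-R,0,0] : Fin 3 → ℝ) ![R,R,R]
        ⊆ {y : Fin 3 → ℝ | 0 ≤ y 1 ∧ 0 ≤ y 2} := by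
      rintro y ⟨hl, hu⟩
      exact ⟨by simpa using hl 1, by simpa using hl 2⟩
    have hIOn : IntegrableOn (fun y => totD ψ t (Matrix.toLin' M3 y))
        (Set.Icc (![-R,0,0] : Fin 3 → ℝ) ![R,R,R]) :=
      (hGc.mono hsubQ).integrableOn_compact isCompact_Icc
    have hGz : ∀ y ∈ {y : Fin 3 → ℝ | 0 < y 1 ∧ 0 < y 2}
        \ Set.Icc (![-R,0,0] : Fin 3 → ℝ) ![R,R,R],
        totD ψ t (Matrix.toLin' M3 y) = 0 := by
      rintro y ⟨⟨hy1, hy2⟩, hyI⟩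
      have hKn : ∃ i, M < |(Matrix.toLin' M3 y) i| := by
        by_contra hno
        push_neg at hno
        have h0 := hno 0
        have h1 := hno 1
        have h2 := hno 2
        simp only [Bl_apply, Matrix.cons_val_zero, Matrix.cons_val_one, Matrix.head_cons,
          Matrix.cons_val_two, Matrix.tail_cons, abs_le] at h0 h1 h2
        refine hyI ⟨fun i => ?_, fun i => ?_⟩ <;> fin_cases i <;> simp <;> linarith
      unfold totD
      refine Finset.sum_eq_zero (fun a ha => Finset.sum_eq_zero (fun b hb =>
        Finset.sum_eq_zero (fun c hc => ?_)))
      rw [hzero a (hsgn a ha) b (hsgn b hb) c (hsgn c hc) t ⟨ht0, ht2⟩ _ hKn]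
      simp
    -- split the quadrant integral
    have hdisj1 : Disjoint ({y : Fin 3 → ℝ | 0 < y 1 ∧ 0 < y 2}
        ∩ Set.Icc (![-R,0,0] : Fin 3 → ℝ) ![R,R,R])
        ({y : Fin 3 → ℝ | 0 < y 1 ∧ 0 < y 2} \ Set.Icc (![-R,0,0] : Fin 3 → ℝ) ![R,R,R]) :=
      Set.disjoint_sdiff_right.mono_left Set.inter_subset_right
    have hint2 : IntegrableOn (fun y => totD ψ t (Matrix.toLin' M3 y))
        ({y : Fin 3 → ℝ | 0 < y 1 ∧ 0 < y 2}
          \ Set.Icc (![-R,0,0] : Fin 3 → ℝ) ![R,R,R]) :=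
      integrableOn_zero.congr_fun (fun y hy => (hGz y hy).symm) (hPm.diff measurableSet_Icc)
    have hu1 := setIntegral_union (μ := volume)
      (f := fun y => totD ψ t (Matrix.toLin' M3 y)) hdisj1 (hPm.diff measurableSet_Icc)
      (hIOn.mono_set Set.inter_subset_right) hint2
    rw [Set.inter_union_diff] at hu1
    have hz2 : ∫ y in ({y : Fin 3 → ℝ | 0 < y 1 ∧ 0 < y 2}
        \ Set.Icc (![-R,0,0] : Fin 3 → ℝ) ![R,R,R]), totD ψ t (Matrix.toLin' M3 y) = 0 := by
      rw [setIntegral_congr_fun (hPm.diff measurableSet_Icc) (g := fun _ => (0:ℝ)) hGz,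
        integral_zero]
    -- split the box integral
    have hnulI : volume ((Set.Icc (![-R,0,0] : Fin 3 → ℝ) ![R,R,R])
        \ {y : Fin 3 → ℝ | 0 < y 1 ∧ 0 < y 2}) = 0 := by
      apply measure_mono_null _
        (measure_union_null (hyperplane_null 1 0) (hyperplane_null 2 0))
      rintro y ⟨⟨hl, hu⟩, hyP⟩
      have h1 : 0 ≤ y 1 := by simpa using hl 1
      have h2 : 0 ≤ y 2 := by simpa using hl 2
      simp only [Set.mem_setOf_eq, not_and_or, not_lt] at hyP
      rcases hyP with h | h
      · exact Or.inl (le_antisymm h h1)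
      · exact Or.inr (le_antisymm h h2)
    have hdisj2 : Disjoint ((Set.Icc (![-R,0,0] : Fin 3 → ℝ) ![R,R,R])
        ∩ {y : Fin 3 → ℝ | 0 < y 1 ∧ 0 < y 2})
        ((Set.Icc (![-R,0,0] : Fin 3 → ℝ) ![R,R,R]) \ {y : Fin 3 → ℝ | 0 < y 1 ∧ 0 < y 2}) :=
      Set.disjoint_sdiff_right.mono_left Set.inter_subset_right
    have hu2 := setIntegral_union (μ := volume)
      (f := fun y => totD ψ t (Matrix.toLin' M3 y)) hdisj2 (measurableSet_Icc.diff hPm)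
      (hIOn.mono_set Set.inter_subset_left) (hIOn.mono_set Set.diff_subset)
    rw [Set.inter_union_diff] at hu2
    have hz3 : ∫ y in ((Set.Icc (![-R,0,0] : Fin 3 → ℝ) ![R,R,R])
        \ {y : Fin 3 → ℝ | 0 < y 1 ∧ 0 < y 2}), totD ψ t (Matrix.toLin' M3 y) = 0 := by
      rw [Measure.restrict_zero_set hnulI, integral_zero_measure]
    rw [h1, hu1, hu2, hz2, hz3, add_zero, add_zero, Set.inter_comm]
  -- vanishing side faces
  have hface1f : (∫ y in Set.Icc (![t₁,0,0] : Fin 3 → ℝ) ![t₂,R,R],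
      ff ψ 1 (Fin.insertNth 1 R y)) = 0 := by
    rw [setIntegral_congr_fun measurableSet_Icc
      (g := fun _ => (0:ℝ)) ?_, integral_zero]
    rintro y ⟨hl, hu⟩
    have ht0 : t₁ ≤ y 0 := by simpa using hl 0
    have ht2 : y 0 ≤ t₂ := by simpa using hu 0
    have hins : Fin.insertNth 1 R y = ![y 0, R, y 1, y 2] := by
      funext j; fin_cases j <;> rfl
    have hA : Amap (Fin.insertNth 1 R y) = pt (y 0) ![R, R - y 1, R + y 2] := by
      rw [hins, Amap_apply]; funext j; fin_cases j <;> simp [pt]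
    show ff ψ 1 _ = 0
    unfold ff
    refine Finset.sum_eq_zero (fun a ha => Finset.sum_eq_zero (fun b hb =>
      Finset.sum_eq_zero (fun c hc => ?_)))
    have hwit : ∃ i, M < |(![R, R - y 1, R + y 2] : Fin 3 → ℝ) i| := by
      refine ⟨0, ?_⟩
      show M < |(![R, R - y 1, R + y 2] : Fin 3 → ℝ) 0|
      rw [show (![R, R - y 1, R + y 2] : Fin 3 → ℝ) 0 = R from rfl, abs_of_pos hRpos]
      exact hMR
    rw [hA, hzero a (hsgn a ha) b (hsgn b hb) c (hsgn c hc) (y 0) ⟨le_trans ht₁ ht0, ht2⟩ _ hwit]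
    simp
  have hface1b : (∫ y in Set.Icc (![t₁,0,0] : Fin 3 → ℝ) ![t₂,R,R],
      ff ψ 1 (Fin.insertNth 1 (-R) y)) = 0 := by
    rw [setIntegral_congr_fun measurableSet_Icc
      (g := fun _ => (0:ℝ)) ?_, integral_zero]
    rintro y ⟨hl, hu⟩
    have ht0 : t₁ ≤ y 0 := by simpa using hl 0
    have ht2 : y 0 ≤ t₂ := by simpa using hu 0
    have hins : Fin.insertNth 1 (-R) y = ![y 0, -R, y 1, y 2] := by
      funext j; fin_cases j <;> rfl
    have hA : Amap (Fin.insertNth 1 (-R) y) = pt (y 0) ![-R, -R - y 1, -R + y 2] := by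
      rw [hins, Amap_apply]; funext j; fin_cases j <;> simp [pt]
    show ff ψ 1 _ = 0
    unfold ff
    refine Finset.sum_eq_zero (fun a ha => Finset.sum_eq_zero (fun b hb =>
      Finset.sum_eq_zero (fun c hc => ?_)))
    have hwit : ∃ i, M < |(![-R, -R - y 1, -R + y 2] : Fin 3 → ℝ) i| := by
      refine ⟨0, ?_⟩
      show M < |(![-R, -R - y 1, -R + y 2] : Fin 3 → ℝ) 0|
      rw [show (![-R, -R - y 1, -R + y 2] : Fin 3 → ℝ) 0 = -R from rfl, abs_neg, abs_of_pos hRpos]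
      exact hMR
    rw [hA, hzero a (hsgn a ha) b (hsgn b hb) c (hsgn c hc) (y 0) ⟨le_trans ht₁ ht0, ht2⟩ _ hwit]
    simp
  have hface2f : (∫ y in Set.Icc (![t₁,-R,0] : Fin 3 → ℝ) ![t₂,R,R],
      ff ψ 2 (Fin.insertNth 2 R y)) = 0 := by
    rw [setIntegral_congr_fun measurableSet_Icc
      (g := fun _ => (0:ℝ)) ?_, integral_zero]
    rintro y ⟨hl, hu⟩
    have ht0 : t₁ ≤ y 0 := by simpa using hl 0
    have ht2 : y 0 ≤ t₂ := by simpa using hu 0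
    have hins : Fin.insertNth 2 R y = ![y 0, y 1, R, y 2] := by
      funext j; fin_cases j <;> rfl
    have hA : Amap (Fin.insertNth 2 R y) = pt (y 0) ![y 1, y 1 - R, y 1 + y 2] := by
      rw [hins, Amap_apply]; funext j; fin_cases j <;> simp [pt]
    have hwit : ∃ i, M < |(![y 1, y 1 - R, y 1 + y 2] : Fin 3 → ℝ) i| := by
      by_cases hy1 : |y 1| ≤ M
      · refine ⟨1, ?_⟩
        show M < |(![y 1, y 1 - R, y 1 + y 2] : Fin 3 → ℝ) 1|
        rw [show (![y 1, y 1 - R, y 1 + y 2] : Fin 3 → ℝ) 1 = y 1 - R from rfl]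
        have h1 : y 1 ≤ M := le_trans (le_abs_self _) hy1
        have h2 : R - y 1 ≤ |y 1 - R| := by
          rw [abs_sub_comm]; exact le_abs_self _
        rw [hRdef] at h2 ⊢
        linarith
      · exact ⟨0, by simpa using not_le.mp hy1⟩
    show ff ψ 2 _ = 0
    unfold ff
    refine Finset.sum_eq_zero (fun a ha => Finset.sum_eq_zero (fun b hb =>
      Finset.sum_eq_zero (fun c hc => ?_)))
    rw [hA, hzero a (hsgn a ha) b (hsgn b hb) c (hsgn c hc) (y 0) ⟨le_trans ht₁ ht0, ht2⟩ _ hwit]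
    simp
  have hface3f : (∫ y in Set.Icc (![t₁,-R,0] : Fin 3 → ℝ) ![t₂,R,R],
      ff ψ 3 (Fin.insertNth 3 R y)) = 0 := by
    rw [setIntegral_congr_fun measurableSet_Icc
      (g := fun _ => (0:ℝ)) ?_, integral_zero]
    rintro y ⟨hl, hu⟩
    have ht0 : t₁ ≤ y 0 := by simpa using hl 0
    have ht2 : y 0 ≤ t₂ := by simpa using hu 0
    have hins : Fin.insertNth 3 R y = ![y 0, y 1, y 2, R] := by
      funext j; fin_cases j <;> rfl
    have hA : Amap (Fin.insertNth 3 R y) = pt (y 0) ![y 1, y 1 - y 2, y 1 + R] := by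
      rw [hins, Amap_apply]; funext j; fin_cases j <;> simp [pt]
    have hwit : ∃ i, M < |(![y 1, y 1 - y 2, y 1 + R] : Fin 3 → ℝ) i| := by
      by_cases hy1 : |y 1| ≤ M
      · refine ⟨2, ?_⟩
        show M < |(![y 1, y 1 - y 2, y 1 + R] : Fin 3 → ℝ) 2|
        rw [show (![y 1, y 1 - y 2, y 1 + R] : Fin 3 → ℝ) 2 = y 1 + R from rfl]
        have h1 : -M ≤ y 1 := neg_le_of_abs_le hy1
        have h2 : y 1 + R ≤ |y 1 + R| := le_abs_self _
        rw [hRdef] at h2 ⊢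
        linarith
      · exact ⟨0, by simpa using not_le.mp hy1⟩
    show ff ψ 3 _ = 0
    unfold ff
    refine Finset.sum_eq_zero (fun a ha => Finset.sum_eq_zero (fun b hb =>
      Finset.sum_eq_zero (fun c hc => ?_)))
    rw [hA, hzero a (hsgn a ha) b (hsgn b hb) c (hsgn c hc) (y 0) ⟨le_trans ht₁ ht0, ht2⟩ _ hwit]
    simp
  -- nonnegative boundary fluxes
  have hface2b : 0 ≤ (∫ y in Set.Icc (![t₁,-R,0] : Fin 3 → ℝ) ![t₂,R,R],
      ff ψ 2 (Fin.insertNth 2 0 y)) := by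
    apply setIntegral_nonneg_ae measurableSet_Icc
    filter_upwards [measure_eq_zero_iff_ae_notMem.mp (hyperplane_null 2 0)] with y hy2 hy
    obtain ⟨hl, hu⟩ := hy
    have ht0 : t₁ ≤ y 0 := by simpa using hl 0
    have hw0 : 0 ≤ y 2 := by simpa using hl 2
    have hyne : y 2 ≠ 0 := fun h => hy2 h
    have hw : 0 < y 2 := lt_of_le_of_ne hw0 (Ne.symm hyne)
    have hins : Fin.insertNth 2 (0:ℝ) y = ![y 0, y 1, 0, y 2] := by
      funext j; fin_cases j <;> rfl
    have hA : Amap (Fin.insertNth 2 (0:ℝ) y) = ![y 0, y 1, y 1, y 1 + y 2] := by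
      rw [hins, Amap_apply]; funext j; fin_cases j <;> simp
    have ht0' : (0:ℝ) ≤ y 0 := le_trans ht₁ ht0
    have hrb : y 1 < y 1 + y 2 := by linarith
    have hbc1p := hbc1 1 h1S (y 0) ht0' (y 1) (y 1 + y 2) hrb
    have hbc1m := hbc1 (-1) hm1S (y 0) ht0' (y 1) (y 1 + y 2) hrb
    have hμ := hμ01 |y 1 - (y 1 + y 2)| (abs_nonneg _)
    have hnrm : ∀ z : ℂ,
        ‖Complex.exp (↑θ₁ * Complex.I) * ((μ |y 1 - (y 1 + y 2)| : ℝ) : ℂ) * z‖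
          = μ |y 1 - (y 1 + y 2)| * ‖z‖ := by
      intro z
      rw [norm_mul, norm_mul,
        Complex.norm_exp_ofReal_mul_I, one_mul, Complex.norm_real, Real.norm_eq_abs,
        _root_.abs_of_nonneg hμ.1]
    show 0 ≤ ff ψ 2 _
    unfold ff
    rw [hA]
    simp only [Finset.sum_pair (show (-1:ℝ) ≠ 1 by norm_num), cf, Matrix.cons_val_two,
      Matrix.tail_cons, Matrix.head_cons]
    rw [hbc1p, hbc1m, hnrm, hnrm]
    have hsq : (μ |y 1 - (y 1 + y 2)|)^2 ≤ 1 := by nlinarith [hμ.1, hμ.2]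
    have e1 : 0 ≤ (1 - (μ |y 1 - (y 1 + y 2)|)^2) * ‖ψ 1 (-1) 1 ![y 0, y 1, y 1, y 1 + y 2]‖^2 :=
      mul_nonneg (by linarith) (sq_nonneg _)
    have e2 : 0 ≤ (1 - (μ |y 1 - (y 1 + y 2)|)^2) * ‖ψ 1 (-1) (-1) ![y 0, y 1, y 1, y 1 + y 2]‖^2 :=
      mul_nonneg (by linarith) (sq_nonneg _)
    nlinarith [e1, e2]
  have hface3b : 0 ≤ (∫ y in Set.Icc (![t₁,-R,0] : Fin 3 → ℝ) ![t₂,R,R],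
      ff ψ 3 (Fin.insertNth 3 0 y)) := by
    apply setIntegral_nonneg_ae measurableSet_Icc
    filter_upwards [measure_eq_zero_iff_ae_notMem.mp (hyperplane_null 2 0)] with y hy2 hy
    obtain ⟨hl, hu⟩ := hy
    have ht0 : t₁ ≤ y 0 := by simpa using hl 0
    have hw0 : 0 ≤ y 2 := by simpa using hl 2
    have hyne : y 2 ≠ 0 := fun h => hy2 h
    have hw : 0 < y 2 := lt_of_le_of_ne hw0 (Ne.symm hyne)
    have hins : Fin.insertNth 3 (0:ℝ) y = ![y 0, y 1, y 2, 0] := by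
      funext j; fin_cases j <;> rfl
    have hA : Amap (Fin.insertNth 3 (0:ℝ) y) = ![y 0, y 1, y 1 - y 2, y 1] := by
      rw [hins, Amap_apply]; funext j; fin_cases j <;> simp
    have ht0' : (0:ℝ) ≤ y 0 := le_trans ht₁ ht0
    have har : y 1 - y 2 < y 1 := by linarith
    have hbc2p := hbc2 1 h1S (y 0) ht0' (y 1 - y 2) (y 1) har
    have hbc2m := hbc2 (-1) hm1S (y 0) ht0' (y 1 - y 2) (y 1) har
    have hμ := hμ01 |y 1 - y 2 - y 1| (abs_nonneg _)
    have hnrm : ∀ z : ℂ,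
        ‖Complex.exp (↑θ₂ * Complex.I) * ((μ |y 1 - y 2 - y 1| : ℝ) : ℂ) * z‖
          = μ |y 1 - y 2 - y 1| * ‖z‖ := by
      intro z
      rw [norm_mul, norm_mul,
        Complex.norm_exp_ofReal_mul_I, one_mul, Complex.norm_real, Real.norm_eq_abs,
        _root_.abs_of_nonneg hμ.1]
    show 0 ≤ ff ψ 3 _
    unfold ff
    rw [hA]
    simp only [Finset.sum_pair (show (-1:ℝ) ≠ 1 by norm_num), cf, Matrix.cons_val_three,
      Matrix.tail_cons, Matrix.head_cons]
    rw [hbc2p, hbc2m, hnrm, hnrm]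
    have hsq : (μ |y 1 - y 2 - y 1|)^2 ≤ 1 := by nlinarith [hμ.1, hμ.2]
    have e1 : 0 ≤ (1 - (μ |y 1 - y 2 - y 1|)^2) * ‖ψ (-1) 1 1 ![y 0, y 1, y 1 - y 2, y 1]‖^2 :=
      mul_nonneg (by linarith) (sq_nonneg _)
    have e2 : 0 ≤ (1 - (μ |y 1 - y 2 - y 1|)^2) * ‖ψ (-1) (-1) 1 ![y 0, y 1, y 1 - y 2, y 1]‖^2 :=
      mul_nonneg (by linarith) (sq_nonneg _)
    nlinarith [e1, e2]
  rw [hface0 t₂ (le_trans ht₁ h12) le_rfl, hface0 t₁ ht₁ h12, hface1f, hface1b,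
    hface2f, hface3f] at key
  linarith [key]
end
end

section
/- Let μ : [0,∞) → [0,1] be continuous and θ₁, θ₂ ∈ [0, 2π). Suppose Ψ¹ and Ψ² are both C¹ on [0,∞) × closure(S₁), each satisfies the equal-time evolution equations on (0,∞) × S₁ and the leaky boundary conditions on C₁ and C₂, each has compact spatial support for every bounded time interval, and Ψ¹(0, ·) = Ψ²(0, ·) on S₁. Then Ψ¹ = Ψ² everywhere on [0,∞) × closure(S₁). -/
open Complex MeasureTheory

noncomputable section

lemma sp_pt (t : ℝ) (p : Fin 3 → ℝ) : sp (pt t p) = p := by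
  funext i; fin_cases i <;> rfl

lemma isOpen_S1 : IsOpen S1 :=
  (isOpen_lt (continuous_apply 1) (continuous_apply 0)).inter
    (isOpen_lt (continuous_apply 0) (continuous_apply 2))

lemma isOpen_U : IsOpen {x : Fin 4 → ℝ | 0 < x 0 ∧ sp x ∈ S1} := by
  refine (isOpen_lt continuous_const (continuous_apply 0)).inter (isOpen_S1.preimage ?_)
  unfold sp; exact continuous_pi (fun i => by fin_cases i <;> simp [continuous_apply])

lemma U_subset_D : {x : Fin 4 → ℝ | 0 < x 0 ∧ sp x ∈ S1} ⊆ {x : Fin 4 → ℝ | 0 ≤ x 0 ∧ sp x ∈ closure S1} :=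
  fun x hx => ⟨hx.1.le, subset_closure hx.2⟩

lemma vec_decomp (a b c : ℝ) :
    (![1, -a, -b, -c] : Fin 4 → ℝ)
      = (Pi.single 0 1 : Fin 4 → ℝ) - a • (Pi.single 1 1 : Fin 4 → ℝ)
        - b • (Pi.single 2 1 : Fin 4 → ℝ) - c • (Pi.single 3 1 : Fin 4 → ℝ) := by
  funext i; fin_cases i <;> simp [Pi.single_apply]

lemma fderiv_dir (f : (Fin 4 → ℝ) → ℂ) (x : Fin 4 → ℝ) (a b c : ℝ) :
    fderiv ℝ f x ![1, -a, -b, -c]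
      = pdC 0 f x - a * pdC 1 f x - b * pdC 2 f x - c * pdC 3 f x := by
  rw [vec_decomp]
  simp only [map_sub, ContinuousLinearMap.map_smul, pdC, smul_eq_mul, Complex.real_smul]

/-- derivative of the path `u ↦ pt u (p + (t₂-u)•v)` -/
lemma hasDerivAt_path (a b c t₂ : ℝ) (p : Fin 3 → ℝ) (s : ℝ) :
    HasDerivAt (fun u => pt u (fun i => p i + (t₂ - u) * ![a, b, c] i))
      ![1, -a, -b, -c] s := by
  rw [hasDerivAt_pi]
  intro i
  fin_cases i
  · exact hasDerivAt_id s
  · show HasDerivAt (fun u => p 0 + (t₂ - u) * a) (-a) s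
    simpa using (((hasDerivAt_id s).const_sub t₂).mul_const a).const_add (p 0)
  · show HasDerivAt (fun u => p 1 + (t₂ - u) * b) (-b) s
    simpa using (((hasDerivAt_id s).const_sub t₂).mul_const b).const_add (p 1)
  · show HasDerivAt (fun u => p 2 + (t₂ - u) * c) (-c) s
    simpa using (((hasDerivAt_id s).const_sub t₂).mul_const c).const_add (p 2)

lemma neg_mem_pm {x : ℝ} (hx : x ∈ ({-1, 1} : Set ℝ)) : -x ∈ ({-1, 1} : Set ℝ) := by
  rcases hx with rfl | rfl
  · right; norm_num
  · left; norm_num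

lemma segment_est (ω : ℝ) (hω : 0 ≤ ω) (φ : ℝ → ℝ → ℝ → (Fin 4 → ℝ) → ℂ)
    (hreg : ∀ ς₀ ∈ ({-1, 1} : Set ℝ), ∀ ς₁ ∈ ({-1, 1} : Set ℝ), ∀ ς₂ ∈ ({-1, 1} : Set ℝ),
      ContDiffOn ℝ 1 (φ ς₀ ς₁ ς₂) {x : Fin 4 → ℝ | 0 ≤ x 0 ∧ sp x ∈ closure S1})
    (heq : ∀ ς₀ ∈ ({-1, 1} : Set ℝ), ∀ ς₁ ∈ ({-1, 1} : Set ℝ), ∀ ς₂ ∈ ({-1, 1} : Set ℝ),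
      ∀ x : Fin 4 → ℝ, 0 < x 0 → sp x ∈ S1 →
        pdC 0 (φ ς₀ ς₁ ς₂) x - (ς₀ : ℂ) * pdC 1 (φ ς₀ ς₁ ς₂) x
          - (ς₁ : ℂ) * pdC 2 (φ ς₀ ς₁ ς₂) x - (ς₂ : ℂ) * pdC 3 (φ ς₀ ς₁ ς₂) x
          + Complex.I * (ω : ℂ) * φ ς₀ (-ς₁) ς₂ x
          + Complex.I * (ω : ℂ) * φ ς₀ ς₁ (-ς₂) x = 0)
    (a b c : ℝ) (ha : a ∈ ({-1, 1} : Set ℝ)) (hb : b ∈ ({-1, 1} : Set ℝ))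
    (hc : c ∈ ({-1, 1} : Set ℝ))
    (t₁ t₂ : ℝ) (ht₁ : 0 ≤ t₁) (h12 : t₁ ≤ t₂)
    (p : Fin 3 → ℝ)
    (hcl : ∀ s ∈ Set.Icc t₁ t₂, (fun i => p i + (t₂ - s) * ![a, b, c] i) ∈ closure S1)
    (hin : ∀ s ∈ Set.Ioo t₁ t₂, (fun i => p i + (t₂ - s) * ![a, b, c] i) ∈ S1)
    (g : ℝ → ℝ) (hgc : ContinuousOn g (Set.Icc t₁ t₂))
    (hbd : ∀ s ∈ Set.Icc t₁ t₂,
      ‖φ a (-b) c (pt s (fun i => p i + (t₂ - s) * ![a, b, c] i))‖ ≤ g s ∧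
      ‖φ a b (-c) (pt s (fun i => p i + (t₂ - s) * ![a, b, c] i))‖ ≤ g s) :
    ‖φ a b c (pt t₂ p)‖
      ≤ ‖φ a b c (pt t₁ (fun i => p i + (t₂ - t₁) * ![a, b, c] i))‖
        + ∫ s in t₁..t₂, 2 * ω * g s := by
  set q : ℝ → Fin 3 → ℝ := fun s i => p i + (t₂ - s) * ![a, b, c] i with hq
  set γ : ℝ → Fin 4 → ℝ := fun s => pt s (q s) with hγ
  have hqt₂ : q t₂ = p := by funext i; simp [hq]
  have hγ0 : ∀ s, γ s 0 = s := fun s => rfl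
  have hspγ : ∀ s, sp (γ s) = q s := fun s => sp_pt s (q s)
  have hγc : Continuous γ := by
    apply continuous_pi
    intro i
    fin_cases i
    · exact continuous_id
    · show Continuous fun s => p 0 + (t₂ - s) * ![a, b, c] 0
      fun_prop
    · show Continuous fun s => p 1 + (t₂ - s) * ![a, b, c] 1
      fun_prop
    · show Continuous fun s => p 2 + (t₂ - s) * ![a, b, c] 2
      fun_prop
  have hmemD : ∀ s ∈ Set.Icc t₁ t₂, γ s ∈ {x : Fin 4 → ℝ | 0 ≤ x 0 ∧ sp x ∈ closure S1} := by
    intro s hs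
    exact ⟨by rw [hγ0]; linarith [hs.1], by rw [hspγ]; exact hcl s hs⟩
  have hφcont : ∀ a' ∈ ({-1, 1} : Set ℝ), ∀ b' ∈ ({-1, 1} : Set ℝ), ∀ c' ∈ ({-1, 1} : Set ℝ),
      ContinuousOn (fun s => φ a' b' c' (γ s)) (Set.Icc t₁ t₂) := by
    intro a' ha' b' hb' c' hc'
    exact ((hreg a' ha' b' hb' c' hc').continuousOn).comp hγc.continuousOn hmemD
  set f' : ℝ → ℂ := fun s =>
    -(Complex.I * (ω : ℂ) * φ a (-b) c (γ s) + Complex.I * (ω : ℂ) * φ a b (-c) (γ s)) with hf'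
  have hderiv : ∀ s ∈ Set.Ioo t₁ t₂, HasDerivAt (fun u => φ a b c (γ u)) (f' s) s := by
    intro s hs
    have hsU : γ s ∈ {x : Fin 4 → ℝ | 0 < x 0 ∧ sp x ∈ S1} := by
      refine ⟨?_, ?_⟩
      · rw [hγ0]; linarith [hs.1]
      · rw [hspγ]; exact hin s hs
    have hDnhds : {x : Fin 4 → ℝ | 0 ≤ x 0 ∧ sp x ∈ closure S1} ∈ nhds (γ s) :=
      Filter.mem_of_superset (isOpen_U.mem_nhds hsU) U_subset_D
    have hdiff : DifferentiableAt ℝ (φ a b c) (γ s) :=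
      ((hreg a ha b hb c hc).differentiableOn one_ne_zero).differentiableAt hDnhds
    have hpath := hasDerivAt_path a b c t₂ p s
    have hcomp := (hdiff.hasFDerivAt).comp_hasDerivAt s hpath
    rw [fderiv_dir] at hcomp
    have hval := heq a ha b hb c hc (γ s) (by rw [hγ0]; linarith [hs.1]) (by rw [hspγ]; exact hin s hs)
    have : pdC 0 (φ a b c) (γ s) - (a : ℂ) * pdC 1 (φ a b c) (γ s)
        - (b : ℂ) * pdC 2 (φ a b c) (γ s) - (c : ℂ) * pdC 3 (φ a b c) (γ s) = f' s := by
      rw [hf']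
      linear_combination hval
    rw [this] at hcomp
    exact hcomp
  have hf'c : ContinuousOn f' (Set.Icc t₁ t₂) := by
    apply ContinuousOn.neg
    exact (continuousOn_const.mul (hφcont a ha (-b) (neg_mem_pm hb) c hc)).add
      (continuousOn_const.mul (hφcont a ha b hb (-c) (neg_mem_pm hc)))
  have hf'int : IntervalIntegrable f' volume t₁ t₂ :=
    (hf'c.mono (by rw [Set.uIcc_of_le h12])).intervalIntegrable
  have hhc : ContinuousOn (fun u => φ a b c (γ u)) (Set.Icc t₁ t₂) := hφcont a ha b hb c hc
  have hFTC : ∫ s in t₁..t₂, f' s = φ a b c (γ t₂) - φ a b c (γ t₁) :=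
    intervalIntegral.integral_eq_sub_of_hasDeriv_right_of_le h12 hhc
      (fun s hs => (hderiv s hs).hasDerivWithinAt) hf'int
  have hgint : IntervalIntegrable (fun s => 2 * ω * g s) volume t₁ t₂ :=
    ((continuousOn_const.mul hgc).mono (by rw [Set.uIcc_of_le h12])).intervalIntegrable
  have hnormle : ∀ s ∈ Set.Icc t₁ t₂, ‖f' s‖ ≤ 2 * ω * g s := by
    intro s hs
    obtain ⟨hb1, hb2⟩ := hbd s hs
    have e1 : ‖Complex.I * (ω : ℂ) * φ a (-b) c (γ s)‖ = ω * ‖φ a (-b) c (γ s)‖ := by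
      rw [norm_mul, norm_mul, Complex.norm_I, one_mul, Complex.norm_real,
        Real.norm_of_nonneg hω]
    have e2 : ‖Complex.I * (ω : ℂ) * φ a b (-c) (γ s)‖ = ω * ‖φ a b (-c) (γ s)‖ := by
      rw [norm_mul, norm_mul, Complex.norm_I, one_mul, Complex.norm_real,
        Real.norm_of_nonneg hω]
    calc ‖f' s‖ ≤ ‖Complex.I * (ω : ℂ) * φ a (-b) c (γ s)‖
          + ‖Complex.I * (ω : ℂ) * φ a b (-c) (γ s)‖ := by
            rw [hf', norm_neg]; exact norm_add_le _ _
      _ = ω * ‖φ a (-b) c (γ s)‖ + ω * ‖φ a b (-c) (γ s)‖ := by rw [e1, e2]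
      _ ≤ 2 * ω * g s := by nlinarith [mul_le_mul_of_nonneg_left hb1 hω,
            mul_le_mul_of_nonneg_left hb2 hω]
  have hintle : ‖∫ s in t₁..t₂, f' s‖ ≤ ∫ s in t₁..t₂, 2 * ω * g s := by
    calc ‖∫ s in t₁..t₂, f' s‖ ≤ ∫ s in t₁..t₂, ‖f' s‖ :=
          intervalIntegral.norm_integral_le_integral_norm h12
      _ ≤ ∫ s in t₁..t₂, 2 * ω * g s := by
          apply intervalIntegral.integral_mono_on h12 hf'int.norm hgint hnormle
  have hdiffnorm : ‖φ a b c (γ t₂)‖ - ‖φ a b c (γ t₁)‖ ≤ ∫ s in t₁..t₂, 2 * ω * g s := by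
    calc ‖φ a b c (γ t₂)‖ - ‖φ a b c (γ t₁)‖ ≤ ‖φ a b c (γ t₂) - φ a b c (γ t₁)‖ :=
          norm_sub_norm_le _ _
      _ = ‖∫ s in t₁..t₂, f' s‖ := by rw [hFTC]
      _ ≤ _ := hintle
  have hend : γ t₂ = pt t₂ p := by show pt t₂ (q t₂) = pt t₂ p; rw [hqt₂]
  have hstart : γ t₁ = pt t₁ (fun i => p i + (t₂ - t₁) * ![a, b, c] i) := rfl
  rw [hend, hstart] at hdiffnorm
  linarith

lemma norm_le_on_closure {f : (Fin 3 → ℝ) → ℂ} {M : ℝ}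
    (hf : ContinuousOn f (closure S1)) (h : ∀ p ∈ S1, ‖f p‖ ≤ M) :
    ∀ p ∈ closure S1, ‖f p‖ ≤ M := by
  intro p hp
  have hne : (nhdsWithin p S1).NeBot := mem_closure_iff_nhdsWithin_neBot.mp hp
  have ht : Filter.Tendsto f (nhdsWithin p S1) (nhds (f p)) :=
    ((hf p hp).mono subset_closure).tendsto
  refine le_of_tendsto ht.norm ?_
  filter_upwards [self_mem_nhdsWithin] with q hq using h q hq

lemma eq_zero_on_closure {f : (Fin 3 → ℝ) → ℂ}
    (hf : ContinuousOn f (closure S1)) (h : ∀ p ∈ S1, f p = 0) :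
    ∀ p ∈ closure S1, f p = 0 := by
  intro p hp
  have hne : (nhdsWithin p S1).NeBot := mem_closure_iff_nhdsWithin_neBot.mp hp
  have ht : Filter.Tendsto f (nhdsWithin p S1) (nhds (f p)) :=
    ((hf p hp).mono subset_closure).tendsto
  have ht0 : Filter.Tendsto f (nhdsWithin p S1) (nhds 0) := by
    refine Filter.Tendsto.congr' ?_ tendsto_const_nhds
    filter_upwards [self_mem_nhdsWithin] with q hq using (h q hq).symm
  exact tendsto_nhds_unique ht ht0

/-- the Grönwall majorant -/
def GB (S ω : ℝ) (n : ℕ) (s : ℝ) : ℝ := S * (2 * ω * s) ^ n / n.factorial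

lemma GB_zero (S ω : ℝ) (n : ℕ) : GB S ω (n + 1) 0 = 0 := by
  simp [GB]

lemma GB_cont (S ω : ℝ) (n : ℕ) : Continuous (GB S ω n) := by
  unfold GB; fun_prop

lemma GB_nonneg {S ω : ℝ} (hS : 0 ≤ S) (hω : 0 ≤ ω) (n : ℕ) {s : ℝ} (hs : 0 ≤ s) :
    0 ≤ GB S ω n s := by
  unfold GB
  positivity

lemma GB_integral (S ω : ℝ) (n : ℕ) (a b : ℝ) :
    ∫ s in a..b, 2 * ω * GB S ω n s = GB S ω (n + 1) b - GB S ω (n + 1) a := by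
  have h1 : ∀ s : ℝ, 2 * ω * GB S ω n s = (2 * ω) ^ (n + 1) * S / n.factorial * s ^ n := by
    intro s; unfold GB; rw [mul_pow]; ring
  simp only [h1]
  rw [intervalIntegral.integral_const_mul, integral_pow]
  unfold GB
  rw [Nat.factorial_succ]
  have hn : ((n : ℝ) + 1) ≠ 0 := by positivity
  have hf : ((n.factorial : ℝ)) ≠ 0 := Nat.cast_ne_zero.mpr n.factorial_ne_zero
  field_simp
  push_cast
  ring

lemma mem_S1_line {va vb vc r : ℝ} {p : Fin 3 → ℝ}
    (h1 : p 1 + r * vb < p 0 + r * va) (h2 : p 0 + r * va < p 2 + r * vc) :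
    (fun i => p i + r * ![va, vb, vc] i) ∈ S1 := by
  refine ⟨?_, ?_⟩ <;> simp only [Matrix.cons_val_zero, Matrix.cons_val_one, Matrix.head_cons,
    Matrix.cons_val_two, Matrix.tail_cons]
  · exact h1
  · exact h2

lemma mem_clS1_line {va vb vc r : ℝ} {p : Fin 3 → ℝ}
    (h1 : p 1 + r * vb ≤ p 0 + r * va) (h2 : p 0 + r * va ≤ p 2 + r * vc) :
    (fun i => p i + r * ![va, vb, vc] i) ∈ closure S1 := by
  rw [closure_S1]
  refine ⟨?_, ?_⟩ <;> simp only [Set.mem_setOf_eq, Matrix.cons_val_zero, Matrix.cons_val_one,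
    Matrix.head_cons, Matrix.cons_val_two, Matrix.tail_cons]
  · exact h1
  · exact h2

/-- the inductive claim: component `(a,b,c)` is bounded by the next Grönwall majorant
at all admissible points. -/
def ClaimP (ω S : ℝ) (n : ℕ) (t : ℝ) (φ : ℝ → ℝ → ℝ → (Fin 4 → ℝ) → ℂ) (a b c : ℝ) : Prop :=
  ∀ t₂ ∈ Set.Icc 0 t, ∀ p : Fin 3 → ℝ, p 1 ≤ p 0 → p 0 ≤ p 2 →
    (p 1 = p 0 → b ≠ a ∧ p 0 < p 2) → (p 0 = p 2 → c ≠ a ∧ p 1 < p 0) →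
    ‖φ a b c (pt t₂ p)‖ ≤ GB S ω (n + 1) t₂

/-- abstract segment-estimate hypothesis -/
def SegH (ω S : ℝ) (n : ℕ) (t : ℝ) (φ : ℝ → ℝ → ℝ → (Fin 4 → ℝ) → ℂ) : Prop :=
  ∀ a ∈ ({-1, 1} : Set ℝ), ∀ b ∈ ({-1, 1} : Set ℝ), ∀ c ∈ ({-1, 1} : Set ℝ),
    ∀ t₁ t₂ : ℝ, 0 ≤ t₁ → t₁ ≤ t₂ → t₂ ≤ t → ∀ p : Fin 3 → ℝ,
    (∀ s ∈ Set.Icc t₁ t₂, (fun i => p i + (t₂ - s) * ![a, b, c] i) ∈ closure S1) →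
    (∀ s ∈ Set.Ioo t₁ t₂, (fun i => p i + (t₂ - s) * ![a, b, c] i) ∈ S1) →
    ‖φ a b c (pt t₂ p)‖
      ≤ ‖φ a b c (pt t₁ (fun i => p i + (t₂ - t₁) * ![a, b, c] i))‖
        + (GB S ω (n + 1) t₂ - GB S ω (n + 1) t₁)

/-- abstract zero initial data hypothesis -/
def InitH (φ : ℝ → ℝ → ℝ → (Fin 4 → ℝ) → ℂ) : Prop :=
  ∀ a ∈ ({-1, 1} : Set ℝ), ∀ b ∈ ({-1, 1} : Set ℝ), ∀ c ∈ ({-1, 1} : Set ℝ),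
    ∀ p ∈ closure S1, φ a b c (pt 0 p) = 0

lemma straight {ω S : ℝ} {n : ℕ} {t : ℝ} {φ : ℝ → ℝ → ℝ → (Fin 4 → ℝ) → ℂ}
    (hseg : SegH ω S n t φ) (hinit : InitH φ)
    (a b c : ℝ) (ha : a ∈ ({-1, 1} : Set ℝ)) (hb : b ∈ ({-1, 1} : Set ℝ))
    (hc : c ∈ ({-1, 1} : Set ℝ))
    (hab : ¬(a = -1 ∧ b = 1)) (hac : ¬(a = 1 ∧ c = -1)) :
    ClaimP ω S n t φ a b c := by
  intro t₂ ht₂ p h01 h02 hI1 hI2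
  have h0t₂ : 0 ≤ t₂ := ht₂.1
  -- separation rates are nonnegative
  have hab' : 0 ≤ a - b := by
    rcases ha with rfl | rfl <;> rcases hb with rfl | rfl <;> norm_num
    exact hab ⟨rfl, rfl⟩
  have hac' : 0 ≤ c - a := by
    rcases ha with rfl | rfl <;> rcases hc with rfl | rfl <;> norm_num
    exact hac ⟨rfl, rfl⟩
  -- strict rates in the tangential-degenerate situations
  have hab2 : b ≠ a → a - b = 2 := by
    intro hne; rcases ha with rfl | rfl <;> rcases hb with rfl | rfl <;> revert hne <;> norm_num
    exact hab ⟨rfl, rfl⟩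
  have hac2 : c ≠ a → c - a = 2 := by
    intro hne; rcases ha with rfl | rfl <;> rcases hc with rfl | rfl <;> revert hne <;> norm_num
    exact hac ⟨rfl, rfl⟩
  have hcl : ∀ s ∈ Set.Icc 0 t₂, (fun i => p i + (t₂ - s) * ![a, b, c] i) ∈ closure S1 := by
    intro s hs
    have hr : 0 ≤ t₂ - s := by linarith [hs.2]
    refine mem_clS1_line ?_ ?_ <;> nlinarith [mul_nonneg hr hab', mul_nonneg hr hac']
  have hin : ∀ s ∈ Set.Ioo 0 t₂, (fun i => p i + (t₂ - s) * ![a, b, c] i) ∈ S1 := by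
    intro s hs
    have hr : 0 < t₂ - s := by linarith [hs.2]
    refine mem_S1_line ?_ ?_
    · rcases h01.lt_or_eq with h | h
      · nlinarith [mul_nonneg hr.le hab']
      · have := (hI1 h).1
        have h2 := hab2 this
        nlinarith
    · rcases h02.lt_or_eq with h | h
      · nlinarith [mul_nonneg hr.le hac']
      · have := (hI2 h).1
        have h2 := hac2 this
        nlinarith
  have hmain := hseg a ha b hb c hc 0 t₂ le_rfl h0t₂ ht₂.2 p hcl hin
  rw [hinit a ha b hb c hc _ (hcl 0 ⟨le_rfl, h0t₂⟩), norm_zero, GB_zero, sub_zero, zero_add]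
    at hmain
  exact hmain

lemma reflC1 {ω S : ℝ} {n : ℕ} {t : ℝ} {φ : ℝ → ℝ → ℝ → (Fin 4 → ℝ) → ℂ}
    (hseg : SegH ω S n t φ) (hinit : InitH φ)
    (hbc1 : ∀ c ∈ ({-1, 1} : Set ℝ), ∀ s : ℝ, 0 ≤ s → ∀ r b : ℝ, r < b →
      ‖φ (-1) 1 c ![s, r, r, b]‖ ≤ ‖φ 1 (-1) c ![s, r, r, b]‖)
    (c : ℝ) (hc : c ∈ ({-1, 1} : Set ℝ))
    (prev : ClaimP ω S n t φ 1 (-1) c) :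
    ClaimP ω S n t φ (-1) 1 c := by
  intro t₂ ht₂ p h01 h02 hI1 hI2
  have h0t₂ : 0 ≤ t₂ := ht₂.1
  have hcm : -1 ≤ c ∧ c ≤ 1 := by rcases hc with rfl | rfl <;> norm_num
  set δ := (p 0 - p 1) / 2 with hδ
  have hδ0 : 0 ≤ δ := by rw [hδ]; linarith
  have hd2le : ∀ r' : ℝ, 0 ≤ r' → p 0 + r' * (-1) ≤ p 2 + r' * c := by
    intro r' hr'; nlinarith [hcm.1]
  have hd2lt : ∀ r' : ℝ, 0 < r' → p 0 + r' * (-1) < p 2 + r' * c := by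
    intro r' hr'
    rcases h02.lt_or_eq with h | h
    · nlinarith [hcm.1]
    · have hc1 : c ≠ -1 := (hI2 h).1
      rcases hc with rfl | rfl
      · exact absurd rfl hc1
      · nlinarith
  by_cases hcase : t₂ ≤ δ
  · have hcl : ∀ s ∈ Set.Icc 0 t₂, (fun i => p i + (t₂ - s) * ![(-1:ℝ), 1, c] i) ∈ closure S1 := by
      intro s hs
      have hr : 0 ≤ t₂ - s := by linarith [hs.2]
      have hr2 : t₂ - s ≤ δ := by linarith [hs.1]
      exact mem_clS1_line (by nlinarith) (hd2le _ hr)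
    have hin : ∀ s ∈ Set.Ioo 0 t₂, (fun i => p i + (t₂ - s) * ![(-1:ℝ), 1, c] i) ∈ S1 := by
      intro s hs
      have hr : 0 < t₂ - s := by linarith [hs.2]
      have hr2 : t₂ - s < δ := by linarith [hs.1]
      exact mem_S1_line (by nlinarith) (hd2lt _ hr)
    have hmain := hseg (-1) (by norm_num) 1 (by norm_num) c hc 0 t₂ le_rfl h0t₂ ht₂.2 p hcl hin
    rw [hinit (-1) (by norm_num) 1 (by norm_num) c hc _ (hcl 0 ⟨le_rfl, h0t₂⟩), norm_zero,
      GB_zero, sub_zero, zero_add] at hmain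
    exact hmain
  · push_neg at hcase
    set t₁ := t₂ - δ with ht₁def
    have ht₁0 : 0 < t₁ := by rw [ht₁def]; linarith
    have h12 : t₁ ≤ t₂ := by rw [ht₁def]; linarith
    have hcl : ∀ s ∈ Set.Icc t₁ t₂, (fun i => p i + (t₂ - s) * ![(-1:ℝ), 1, c] i) ∈ closure S1 := by
      intro s hs
      have hr : 0 ≤ t₂ - s := by linarith [hs.2]
      have hr2 : t₂ - s ≤ δ := by
        have := hs.1; rw [ht₁def] at this; linarith
      exact mem_clS1_line (by nlinarith) (hd2le _ hr)
    have hin : ∀ s ∈ Set.Ioo t₁ t₂, (fun i => p i + (t₂ - s) * ![(-1:ℝ), 1, c] i) ∈ S1 := by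
      intro s hs
      have hr : 0 < t₂ - s := by linarith [hs.2]
      have hr2 : t₂ - s < δ := by
        have := hs.1; rw [ht₁def] at this; linarith
      exact mem_S1_line (by nlinarith) (hd2lt _ hr)
    have hmain := hseg (-1) (by norm_num) 1 (by norm_num) c hc t₁ t₂ ht₁0.le h12 ht₂.2 p hcl hin
    set q₁ : Fin 3 → ℝ := fun i => p i + (t₂ - t₁) * ![(-1:ℝ), 1, c] i with hq₁def
    have hδ' : t₂ - t₁ = δ := by rw [ht₁def]; ring
    set r : ℝ := p 0 - δ with hrdef
    set bb : ℝ := p 2 + δ * c with hbbdef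
    have hq0 : q₁ 0 = r := by
      show p 0 + (t₂ - t₁) * ![(-1:ℝ), 1, c] 0 = r
      rw [hδ']; simp [hrdef]; ring
    have hq1 : q₁ 1 = r := by
      show p 1 + (t₂ - t₁) * ![(-1:ℝ), 1, c] 1 = r
      rw [hδ']; simp [hrdef, hδ]; ring
    have hq2 : q₁ 2 = bb := by
      show p 2 + (t₂ - t₁) * ![(-1:ℝ), 1, c] 2 = bb
      rw [hδ']; simp [hbbdef]
    have hrb : r < bb := by
      rcases h02.lt_or_eq with h | h
      · have h1 : 0 ≤ δ * (c + 1) := by nlinarith [hcm.1]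
        rw [hrdef, hbbdef]; nlinarith
      · obtain ⟨hc1, hlt⟩ := hI2 h
        rcases hc with rfl | rfl
        · exact absurd rfl hc1
        · have hδpos : 0 < δ := by rw [hδ]; linarith
          rw [hrdef, hbbdef, ← h]; linarith
    have hptq : pt t₁ q₁ = ![t₁, r, r, bb] := by
      funext i; fin_cases i
      · rfl
      · exact hq0
      · exact hq1
      · exact hq2
    have hbc := hbc1 c hc t₁ ht₁0.le r bb hrb
    have hprev := prev t₁ ⟨ht₁0.le, le_trans h12 ht₂.2⟩ q₁
      (le_of_eq (hq1.trans hq0.symm))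
      (by rw [hq0, hq2]; exact hrb.le)
      (fun _ => ⟨by norm_num, by rw [hq0, hq2]; exact hrb⟩)
      (fun h => absurd (hq0 ▸ hq2 ▸ h) hrb.ne)
    calc ‖φ (-1) 1 c (pt t₂ p)‖
        ≤ ‖φ (-1) 1 c (pt t₁ q₁)‖ + (GB S ω (n + 1) t₂ - GB S ω (n + 1) t₁) := hmain
      _ ≤ ‖φ 1 (-1) c (pt t₁ q₁)‖ + (GB S ω (n + 1) t₂ - GB S ω (n + 1) t₁) := by
          rw [hptq]; linarith [hbc]
      _ ≤ GB S ω (n + 1) t₁ + (GB S ω (n + 1) t₂ - GB S ω (n + 1) t₁) := by linarith [hprev]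
      _ = GB S ω (n + 1) t₂ := by ring

lemma reflC2 {ω S : ℝ} {n : ℕ} {t : ℝ} {φ : ℝ → ℝ → ℝ → (Fin 4 → ℝ) → ℂ}
    (hseg : SegH ω S n t φ) (hinit : InitH φ)
    (hbc2 : ∀ b ∈ ({-1, 1} : Set ℝ), ∀ s : ℝ, 0 ≤ s → ∀ aa r : ℝ, aa < r →
      ‖φ 1 b (-1) ![s, r, aa, r]‖ ≤ ‖φ (-1) b 1 ![s, r, aa, r]‖)
    (b : ℝ) (hb : b ∈ ({-1, 1} : Set ℝ))
    (prev : ClaimP ω S n t φ (-1) b 1) :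
    ClaimP ω S n t φ 1 b (-1) := by
  intro t₂ ht₂ p h01 h02 hI1 hI2
  have h0t₂ : 0 ≤ t₂ := ht₂.1
  have hbm : -1 ≤ b ∧ b ≤ 1 := by rcases hb with rfl | rfl <;> norm_num
  set δ := (p 2 - p 0) / 2 with hδ
  have hδ0 : 0 ≤ δ := by rw [hδ]; linarith
  have hd1le : ∀ r' : ℝ, 0 ≤ r' → p 1 + r' * b ≤ p 0 + r' * 1 := by
    intro r' hr'; nlinarith [hbm.2]
  have hd1lt : ∀ r' : ℝ, 0 < r' → p 1 + r' * b < p 0 + r' * 1 := by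
    intro r' hr'
    rcases h01.lt_or_eq with h | h
    · nlinarith [hbm.2]
    · have hb1 : b ≠ 1 := (hI1 h).1
      rcases hb with rfl | rfl
      · nlinarith
      · exact absurd rfl hb1
  by_cases hcase : t₂ ≤ δ
  · have hcl : ∀ s ∈ Set.Icc 0 t₂, (fun i => p i + (t₂ - s) * ![(1:ℝ), b, -1] i) ∈ closure S1 := by
      intro s hs
      have hr : 0 ≤ t₂ - s := by linarith [hs.2]
      have hr2 : t₂ - s ≤ δ := by linarith [hs.1]
      exact mem_clS1_line (hd1le _ hr) (by nlinarith)
    have hin : ∀ s ∈ Set.Ioo 0 t₂, (fun i => p i + (t₂ - s) * ![(1:ℝ), b, -1] i) ∈ S1 := by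
      intro s hs
      have hr : 0 < t₂ - s := by linarith [hs.2]
      have hr2 : t₂ - s < δ := by linarith [hs.1]
      exact mem_S1_line (hd1lt _ hr) (by nlinarith)
    have hmain := hseg 1 (by norm_num) b hb (-1) (by norm_num) 0 t₂ le_rfl h0t₂ ht₂.2 p hcl hin
    rw [hinit 1 (by norm_num) b hb (-1) (by norm_num) _ (hcl 0 ⟨le_rfl, h0t₂⟩), norm_zero,
      GB_zero, sub_zero, zero_add] at hmain
    exact hmain
  · push_neg at hcase
    set t₁ := t₂ - δ with ht₁def
    have ht₁0 : 0 < t₁ := by rw [ht₁def]; linarith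
    have h12 : t₁ ≤ t₂ := by rw [ht₁def]; linarith
    have hcl : ∀ s ∈ Set.Icc t₁ t₂, (fun i => p i + (t₂ - s) * ![(1:ℝ), b, -1] i) ∈ closure S1 := by
      intro s hs
      have hr : 0 ≤ t₂ - s := by linarith [hs.2]
      have hr2 : t₂ - s ≤ δ := by
        have := hs.1; rw [ht₁def] at this; linarith
      exact mem_clS1_line (hd1le _ hr) (by nlinarith)
    have hin : ∀ s ∈ Set.Ioo t₁ t₂, (fun i => p i + (t₂ - s) * ![(1:ℝ), b, -1] i) ∈ S1 := by
      intro s hs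
      have hr : 0 < t₂ - s := by linarith [hs.2]
      have hr2 : t₂ - s < δ := by
        have := hs.1; rw [ht₁def] at this; linarith
      exact mem_S1_line (hd1lt _ hr) (by nlinarith)
    have hmain := hseg 1 (by norm_num) b hb (-1) (by norm_num) t₁ t₂ ht₁0.le h12 ht₂.2 p hcl hin
    set q₁ : Fin 3 → ℝ := fun i => p i + (t₂ - t₁) * ![(1:ℝ), b, -1] i with hq₁def
    have hδ' : t₂ - t₁ = δ := by rw [ht₁def]; ring
    set r : ℝ := p 0 + δ with hrdef
    set aa : ℝ := p 1 + δ * b with haadef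
    have hq0 : q₁ 0 = r := by
      show p 0 + (t₂ - t₁) * ![(1:ℝ), b, -1] 0 = r
      rw [hδ']; simp [hrdef]
    have hq1 : q₁ 1 = aa := by
      show p 1 + (t₂ - t₁) * ![(1:ℝ), b, -1] 1 = aa
      rw [hδ']; simp [haadef]
    have hq2 : q₁ 2 = r := by
      show p 2 + (t₂ - t₁) * ![(1:ℝ), b, -1] 2 = r
      rw [hδ']; simp [hrdef, hδ]; ring
    have har : aa < r := by
      rcases h01.lt_or_eq with h | h
      · have h1 : 0 ≤ δ * (1 - b) := by nlinarith [hbm.2]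
        rw [hrdef, haadef]; nlinarith
      · obtain ⟨hb1, hlt⟩ := hI1 h
        rcases hb with rfl | rfl
        · have hδpos : 0 < δ := by rw [hδ]; linarith
          rw [hrdef, haadef, h]; linarith
        · exact absurd rfl hb1
    have hptq : pt t₁ q₁ = ![t₁, r, aa, r] := by
      funext i; fin_cases i
      · rfl
      · exact hq0
      · exact hq1
      · exact hq2
    have hbc := hbc2 b hb t₁ ht₁0.le aa r har
    have hprev := prev t₁ ⟨ht₁0.le, le_trans h12 ht₂.2⟩ q₁
      (by rw [hq0, hq1]; exact har.le)
      (le_of_eq (hq0.trans hq2.symm))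
      (fun h => absurd (hq1 ▸ hq0 ▸ h) har.ne)
      (fun _ => ⟨by norm_num, by rw [hq0, hq1]; exact har⟩)
    calc ‖φ 1 b (-1) (pt t₂ p)‖
        ≤ ‖φ 1 b (-1) (pt t₁ q₁)‖ + (GB S ω (n + 1) t₂ - GB S ω (n + 1) t₁) := hmain
      _ ≤ ‖φ (-1) b 1 (pt t₁ q₁)‖ + (GB S ω (n + 1) t₂ - GB S ω (n + 1) t₁) := by
          rw [hptq]; linarith [hbc]
      _ ≤ GB S ω (n + 1) t₁ + (GB S ω (n + 1) t₂ - GB S ω (n + 1) t₁) := by linarith [hprev]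
      _ = GB S ω (n + 1) t₂ := by ring

lemma descent {ω S : ℝ} {n : ℕ} {t : ℝ} {φ : ℝ → ℝ → ℝ → (Fin 4 → ℝ) → ℂ}
    (hseg : SegH ω S n t φ) (hinit : InitH φ)
    (hbc1 : ∀ c ∈ ({-1, 1} : Set ℝ), ∀ s : ℝ, 0 ≤ s → ∀ r b : ℝ, r < b →
      ‖φ (-1) 1 c ![s, r, r, b]‖ ≤ ‖φ 1 (-1) c ![s, r, r, b]‖)
    (hbc2 : ∀ b ∈ ({-1, 1} : Set ℝ), ∀ s : ℝ, 0 ≤ s → ∀ aa r : ℝ, aa < r →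
      ‖φ 1 b (-1) ![s, r, aa, r]‖ ≤ ‖φ (-1) b 1 ![s, r, aa, r]‖) :
    ∀ a ∈ ({-1, 1} : Set ℝ), ∀ b ∈ ({-1, 1} : Set ℝ), ∀ c ∈ ({-1, 1} : Set ℝ),
      ClaimP ω S n t φ a b c := by
  have m1 : (-1 : ℝ) ∈ ({-1, 1} : Set ℝ) := by norm_num
  have p1 : (1 : ℝ) ∈ ({-1, 1} : Set ℝ) := by norm_num
  have P111 : ClaimP ω S n t φ 1 1 1 :=
    straight hseg hinit 1 1 1 p1 p1 p1 (by norm_num) (by norm_num)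
  have P1m1 : ClaimP ω S n t φ 1 (-1) 1 :=
    straight hseg hinit 1 (-1) 1 p1 m1 p1 (by norm_num) (by norm_num)
  have Pmm1 : ClaimP ω S n t φ (-1) (-1) 1 :=
    straight hseg hinit (-1) (-1) 1 m1 m1 p1 (by norm_num) (by norm_num)
  have Pmmm : ClaimP ω S n t φ (-1) (-1) (-1) :=
    straight hseg hinit (-1) (-1) (-1) m1 m1 m1 (by norm_num) (by norm_num)
  have Pm11 : ClaimP ω S n t φ (-1) 1 1 := reflC1 hseg hinit hbc1 1 p1 P1m1
  have P1mm : ClaimP ω S n t φ 1 (-1) (-1) := reflC2 hseg hinit hbc2 (-1) m1 Pmm1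
  have P11m : ClaimP ω S n t φ 1 1 (-1) := reflC2 hseg hinit hbc2 1 p1 Pm11
  have Pm1m : ClaimP ω S n t φ (-1) 1 (-1) := reflC1 hseg hinit hbc1 (-1) m1 P1mm
  intro a ha b hb c hc
  rcases ha with rfl | rfl <;> rcases hb with rfl | rfl <;> rcases hc with rfl | rfl
  · exact Pmmm
  · exact Pmm1
  · exact Pm1m
  · exact Pm11
  · exact P1mm
  · exact P1m1
  · exact P11m
  · exact P111

lemma pm_to_finset {x : ℝ} (h : x ∈ ({-1, 1} : Set ℝ)) : x ∈ ({-1, 1} : Finset ℝ) := by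
  rcases h with rfl | rfl <;> simp

lemma pm_of_finset {x : ℝ} (h : x ∈ ({-1, 1} : Finset ℝ)) : x ∈ ({-1, 1} : Set ℝ) := by
  rcases Finset.mem_insert.mp h with h | h
  · left; exact h
  · right; exact Finset.mem_singleton.mp h

lemma cont_pt_sec (s : ℝ) : Continuous (fun q : Fin 3 → ℝ => pt s q) := by
  apply continuous_pi
  intro i
  fin_cases i
  · exact continuous_const
  · exact continuous_apply 0
  · exact continuous_apply 1
  · exact continuous_apply 2

lemma cont_pt2 : Continuous (fun z : ℝ × (Fin 3 → ℝ) => pt z.1 z.2) := by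
  apply continuous_pi
  intro i
  fin_cases i
  · exact continuous_fst
  · exact (continuous_apply 0).comp continuous_snd
  · exact (continuous_apply 1).comp continuous_snd
  · exact (continuous_apply 2).comp continuous_snd

lemma key (ω : ℝ) (hω : 0 ≤ ω) (φ : ℝ → ℝ → ℝ → (Fin 4 → ℝ) → ℂ)
    (hreg : ∀ ς₀ ∈ ({-1, 1} : Set ℝ), ∀ ς₁ ∈ ({-1, 1} : Set ℝ), ∀ ς₂ ∈ ({-1, 1} : Set ℝ),
      ContDiffOn ℝ 1 (φ ς₀ ς₁ ς₂) {x : Fin 4 → ℝ | 0 ≤ x 0 ∧ sp x ∈ closure S1})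
    (heq : ∀ ς₀ ∈ ({-1, 1} : Set ℝ), ∀ ς₁ ∈ ({-1, 1} : Set ℝ), ∀ ς₂ ∈ ({-1, 1} : Set ℝ),
      ∀ x : Fin 4 → ℝ, 0 < x 0 → sp x ∈ S1 →
        pdC 0 (φ ς₀ ς₁ ς₂) x - (ς₀ : ℂ) * pdC 1 (φ ς₀ ς₁ ς₂) x
          - (ς₁ : ℂ) * pdC 2 (φ ς₀ ς₁ ς₂) x - (ς₂ : ℂ) * pdC 3 (φ ς₀ ς₁ ς₂) x
          + Complex.I * (ω : ℂ) * φ ς₀ (-ς₁) ς₂ x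
          + Complex.I * (ω : ℂ) * φ ς₀ ς₁ (-ς₂) x = 0)
    (hbc1 : ∀ c ∈ ({-1, 1} : Set ℝ), ∀ s : ℝ, 0 ≤ s → ∀ r b : ℝ, r < b →
      ‖φ (-1) 1 c ![s, r, r, b]‖ ≤ ‖φ 1 (-1) c ![s, r, r, b]‖)
    (hbc2 : ∀ b ∈ ({-1, 1} : Set ℝ), ∀ s : ℝ, 0 ≤ s → ∀ aa r : ℝ, aa < r →
      ‖φ 1 b (-1) ![s, r, aa, r]‖ ≤ ‖φ (-1) b 1 ![s, r, aa, r]‖)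
    (hinit : InitH φ)
    (hsupp : ∀ T : ℝ, ∃ K : Set (Fin 3 → ℝ), IsCompact K ∧
      ∀ a ∈ ({-1, 1} : Set ℝ), ∀ b ∈ ({-1, 1} : Set ℝ), ∀ c ∈ ({-1, 1} : Set ℝ),
        ∀ s ∈ Set.Icc 0 T, ∀ p : Fin 3 → ℝ, p ∉ K → φ a b c (pt s p) = 0) :
    ∀ a ∈ ({-1, 1} : Set ℝ), ∀ b ∈ ({-1, 1} : Set ℝ), ∀ c ∈ ({-1, 1} : Set ℝ),
      ∀ t : ℝ, 0 ≤ t → ∀ p ∈ closure S1, φ a b c (pt t p) = 0 := by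
  intro a ha b hb c hc t ht p hp
  obtain ⟨K, hK, hKz⟩ := hsupp t
  -- the compact region
  set C : Set (ℝ × (Fin 3 → ℝ)) := Set.Icc 0 t ×ˢ (closure S1 ∩ K) with hCdef
  have hCcomp : IsCompact C := isCompact_Icc.prod (hK.inter_left isClosed_closure)
  have hmaps : Set.MapsTo (fun z : ℝ × (Fin 3 → ℝ) => pt z.1 z.2) C
      {x : Fin 4 → ℝ | 0 ≤ x 0 ∧ sp x ∈ closure S1} := by
    intro z hz
    exact ⟨hz.1.1, by rw [sp_pt]; exact hz.2.1⟩
  set F : ℝ × (Fin 3 → ℝ) → ℝ := fun z =>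
    ∑ a' ∈ ({-1, 1} : Finset ℝ), ∑ b' ∈ ({-1, 1} : Finset ℝ), ∑ c' ∈ ({-1, 1} : Finset ℝ),
      ‖φ a' b' c' (pt z.1 z.2)‖ with hFdef
  have hFc : ContinuousOn F C := by
    apply continuousOn_finset_sum
    intro a' ha'
    apply continuousOn_finset_sum
    intro b' hb'
    apply continuousOn_finset_sum
    intro c' hc'
    exact (((hreg a' (pm_of_finset ha') b' (pm_of_finset hb') c'
      (pm_of_finset hc')).continuousOn).comp cont_pt2.continuousOn hmaps).norm
  obtain ⟨C₀, hC₀⟩ := hCcomp.exists_bound_of_continuousOn hFc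
  set S : ℝ := max C₀ 0 with hSdef
  have hS0 : 0 ≤ S := le_max_right _ _
  have hSb : ∀ s ∈ Set.Icc 0 t, ∀ q ∈ closure S1,
      ∀ a' ∈ ({-1, 1} : Set ℝ), ∀ b' ∈ ({-1, 1} : Set ℝ), ∀ c' ∈ ({-1, 1} : Set ℝ),
      ‖φ a' b' c' (pt s q)‖ ≤ S := by
    intro s hs q hq a' ha' b' hb' c' hc'
    by_cases hqK : q ∈ K
    · have hz : (s, q) ∈ C := ⟨hs, hq, hqK⟩
      have hsum := hC₀ _ hz
      have t1 : ‖φ a' b' c' (pt s q)‖ ≤ ∑ c'' ∈ ({-1, 1} : Finset ℝ), ‖φ a' b' c'' (pt s q)‖ :=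
        Finset.single_le_sum (f := fun c'' => ‖φ a' b' c'' (pt s q)‖)
          (fun x _ => norm_nonneg _) (pm_to_finset hc')
      have t2 : (∑ c'' ∈ ({-1, 1} : Finset ℝ), ‖φ a' b' c'' (pt s q)‖)
          ≤ ∑ b'' ∈ ({-1, 1} : Finset ℝ), ∑ c'' ∈ ({-1, 1} : Finset ℝ), ‖φ a' b'' c'' (pt s q)‖ :=
        Finset.single_le_sum (f := fun b'' => ∑ c'' ∈ ({-1, 1} : Finset ℝ), ‖φ a' b'' c'' (pt s q)‖)
          (fun x _ => Finset.sum_nonneg fun _ _ => norm_nonneg _) (pm_to_finset hb')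
      have t3 : (∑ b'' ∈ ({-1, 1} : Finset ℝ), ∑ c'' ∈ ({-1, 1} : Finset ℝ),
            ‖φ a' b'' c'' (pt s q)‖) ≤ F (s, q) :=
        Finset.single_le_sum
          (f := fun a'' => ∑ b'' ∈ ({-1, 1} : Finset ℝ), ∑ c'' ∈ ({-1, 1} : Finset ℝ),
            ‖φ a'' b'' c'' (pt s q)‖)
          (fun x _ => Finset.sum_nonneg fun _ _ => Finset.sum_nonneg fun _ _ => norm_nonneg _)
          (pm_to_finset ha')
      have t4 : F (s, q) ≤ C₀ := le_trans (le_abs_self _) hsum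
      have : C₀ ≤ S := le_max_left _ _
      linarith
    · rw [hKz a' ha' b' hb' c' hc' s hs q hqK, norm_zero]
      exact hS0
  have main : ∀ N : ℕ, ∀ s ∈ Set.Icc 0 t, ∀ q ∈ closure S1,
      ∀ a' ∈ ({-1, 1} : Set ℝ), ∀ b' ∈ ({-1, 1} : Set ℝ), ∀ c' ∈ ({-1, 1} : Set ℝ),
      ‖φ a' b' c' (pt s q)‖ ≤ GB S ω N s := by
    intro N
    induction N with
    | zero =>
      intro s hs q hq a' ha' b' hb' c' hc'
      simpa [GB] using hSb s hs q hq a' ha' b' hb' c' hc'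
    | succ n ihn =>
      have hsegH : SegH ω S n t φ := by
        intro a' ha' b' hb' c' hc' t₁ t₂ h0 h12 h2t p' hcl hin
        have hbd : ∀ s ∈ Set.Icc t₁ t₂,
            ‖φ a' (-b') c' (pt s (fun i => p' i + (t₂ - s) * ![a', b', c'] i))‖ ≤ GB S ω n s ∧
            ‖φ a' b' (-c') (pt s (fun i => p' i + (t₂ - s) * ![a', b', c'] i))‖ ≤ GB S ω n s := by
          intro s hs
          have hs' : s ∈ Set.Icc 0 t := ⟨le_trans h0 hs.1, le_trans hs.2 h2t⟩
          exact ⟨ihn s hs' _ (hcl s hs) a' ha' (-b') (neg_mem_pm hb') c' hc',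
                 ihn s hs' _ (hcl s hs) a' ha' b' hb' (-c') (neg_mem_pm hc')⟩
        have hgb := segment_est ω hω φ hreg heq a' b' c' ha' hb' hc' t₁ t₂ h0 h12 p' hcl hin
          (GB S ω n) ((GB_cont S ω n).continuousOn) hbd
        rw [GB_integral] at hgb
        exact hgb
      have hcl8 := descent hsegH hinit hbc1 hbc2
      intro s hs q hq a' ha' b' hb' c' hc'
      have hInt : ∀ q' ∈ S1, ‖φ a' b' c' (pt s q')‖ ≤ GB S ω (n + 1) s := by
        intro q' hq'
        exact hcl8 a' ha' b' hb' c' hc' s hs q' hq'.1.le hq'.2.le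
          (fun h => absurd h hq'.1.ne) (fun h => absurd h hq'.2.ne)
      refine norm_le_on_closure (f := fun q' => φ a' b' c' (pt s q')) ?_ hInt q hq
      exact ((hreg a' ha' b' hb' c' hc').continuousOn).comp (cont_pt_sec s).continuousOn
        (fun q' hq' => ⟨hs.1, by rw [sp_pt]; exact hq'⟩)
  have hlim : Filter.Tendsto (fun N : ℕ => GB S ω N t) Filter.atTop (nhds 0) := by
    have h1 : (fun N : ℕ => GB S ω N t) = fun N : ℕ => S * ((2 * ω * t) ^ N / N.factorial) := by
      funext N; rw [GB, mul_div_assoc]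
    rw [h1]
    simpa using (FloorSemiring.tendsto_pow_div_factorial_atTop (2 * ω * t)).const_mul S
  have hle : ‖φ a b c (pt t p)‖ ≤ 0 := by
    refine ge_of_tendsto hlim ?_
    exact Filter.Eventually.of_forall fun N => main N t ⟨ht, le_rfl⟩ p hp a ha b hb c hc
  simpa using norm_le_zero_iff.mp hle

/-- Uniqueness for the leaky-boundary equal-time IBVP: two `C¹`
solutions with the same initial data on `S₁` agree everywhere on `[0,∞) × closure S₁`. -/
theorem leaky_uniqueness
    (hbar m_e ω : ℝ) (hhbar : 0 < hbar) (hm : 0 ≤ m_e) (hω : ω = m_e / hbar)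
    (θ₁ θ₂ : ℝ) (hθ₁ : θ₁ ∈ Set.Ico 0 (2 * Real.pi)) (hθ₂ : θ₂ ∈ Set.Ico 0 (2 * Real.pi))
    (μ : ℝ → ℝ) (hμc : Continuous μ) (hμ01 : ∀ r, 0 ≤ r → μ r ∈ Set.Icc (0 : ℝ) 1)
    (ψA : ℝ → ℝ → ℝ → (Fin 4 → ℝ) → ℂ)
    -- `Ψ` is C¹ on `[0,∞) × closure S₁`
    (hregA : ∀ ς₀ ∈ ({-1, 1} : Set ℝ), ∀ ς₁ ∈ ({-1, 1} : Set ℝ), ∀ ς₂ ∈ ({-1, 1} : Set ℝ),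
      ContDiffOn ℝ 1 (ψA ς₀ ς₁ ς₂) {x : Fin 4 → ℝ | 0 ≤ x 0 ∧ sp x ∈ closure S1})
    -- equal-time evolution equations on `(0,∞) × S₁`
    (heqA : ∀ ς₀ ∈ ({-1, 1} : Set ℝ), ∀ ς₁ ∈ ({-1, 1} : Set ℝ), ∀ ς₂ ∈ ({-1, 1} : Set ℝ),
      ∀ x : Fin 4 → ℝ, 0 < x 0 → sp x ∈ S1 →
        pdC 0 (ψA ς₀ ς₁ ς₂) x - (ς₀ : ℂ) * pdC 1 (ψA ς₀ ς₁ ς₂) x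
          - (ς₁ : ℂ) * pdC 2 (ψA ς₀ ς₁ ς₂) x - (ς₂ : ℂ) * pdC 3 (ψA ς₀ ς₁ ς₂) x
          + Complex.I * (ω : ℂ) * ψA ς₀ (-ς₁) ς₂ x
          + Complex.I * (ω : ℂ) * ψA ς₀ ς₁ (-ς₂) x = 0)
    -- leaky boundary condition on `C₁ = {s_e1 = s_ph < s_e2}`
    (hbc1A : ∀ ς₂ ∈ ({-1, 1} : Set ℝ), ∀ t : ℝ, 0 ≤ t → ∀ r b : ℝ, r < b →
      ψA (-1) 1 ς₂ ![t, r, r, b]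
        = Complex.exp (θ₁ * Complex.I) * ((μ |r - b| : ℝ) : ℂ) * ψA 1 (-1) ς₂ ![t, r, r, b])
    -- leaky boundary condition on `C₂ = {s_e1 < s_ph = s_e2}`
    (hbc2A : ∀ ς₁ ∈ ({-1, 1} : Set ℝ), ∀ t : ℝ, 0 ≤ t → ∀ a r : ℝ, a < r →
      ψA 1 ς₁ (-1) ![t, r, a, r]
        = Complex.exp (θ₂ * Complex.I) * ((μ |a - r| : ℝ) : ℂ) * ψA (-1) ς₁ 1 ![t, r, a, r])
    -- compact spatial support on every bounded time interval
    (hsuppA : ∀ T : ℝ, ∃ K : Set (Fin 3 → ℝ), IsCompact K ∧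
      ∀ ς₀ ∈ ({-1, 1} : Set ℝ), ∀ ς₁ ∈ ({-1, 1} : Set ℝ), ∀ ς₂ ∈ ({-1, 1} : Set ℝ),
        ∀ t ∈ Set.Icc 0 T, ∀ p : Fin 3 → ℝ, p ∉ K → ψA ς₀ ς₁ ς₂ (pt t p) = 0)
    (ψB : ℝ → ℝ → ℝ → (Fin 4 → ℝ) → ℂ)
    -- `Ψ` is C¹ on `[0,∞) × closure S₁`
    (hregB : ∀ ς₀ ∈ ({-1, 1} : Set ℝ), ∀ ς₁ ∈ ({-1, 1} : Set ℝ), ∀ ς₂ ∈ ({-1, 1} : Set ℝ),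
      ContDiffOn ℝ 1 (ψB ς₀ ς₁ ς₂) {x : Fin 4 → ℝ | 0 ≤ x 0 ∧ sp x ∈ closure S1})
    -- equal-time evolution equations on `(0,∞) × S₁`
    (heqB : ∀ ς₀ ∈ ({-1, 1} : Set ℝ), ∀ ς₁ ∈ ({-1, 1} : Set ℝ), ∀ ς₂ ∈ ({-1, 1} : Set ℝ),
      ∀ x : Fin 4 → ℝ, 0 < x 0 → sp x ∈ S1 →
        pdC 0 (ψB ς₀ ς₁ ς₂) x - (ς₀ : ℂ) * pdC 1 (ψB ς₀ ς₁ ς₂) x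
          - (ς₁ : ℂ) * pdC 2 (ψB ς₀ ς₁ ς₂) x - (ς₂ : ℂ) * pdC 3 (ψB ς₀ ς₁ ς₂) x
          + Complex.I * (ω : ℂ) * ψB ς₀ (-ς₁) ς₂ x
          + Complex.I * (ω : ℂ) * ψB ς₀ ς₁ (-ς₂) x = 0)
    -- leaky boundary condition on `C₁ = {s_e1 = s_ph < s_e2}`
    (hbc1B : ∀ ς₂ ∈ ({-1, 1} : Set ℝ), ∀ t : ℝ, 0 ≤ t → ∀ r b : ℝ, r < b →
      ψB (-1) 1 ς₂ ![t, r, r, b]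
        = Complex.exp (θ₁ * Complex.I) * ((μ |r - b| : ℝ) : ℂ) * ψB 1 (-1) ς₂ ![t, r, r, b])
    -- leaky boundary condition on `C₂ = {s_e1 < s_ph = s_e2}`
    (hbc2B : ∀ ς₁ ∈ ({-1, 1} : Set ℝ), ∀ t : ℝ, 0 ≤ t → ∀ a r : ℝ, a < r →
      ψB 1 ς₁ (-1) ![t, r, a, r]
        = Complex.exp (θ₂ * Complex.I) * ((μ |a - r| : ℝ) : ℂ) * ψB (-1) ς₁ 1 ![t, r, a, r])
    -- compact spatial support on every bounded time interval
    (hsuppB : ∀ T : ℝ, ∃ K : Set (Fin 3 → ℝ), IsCompact K ∧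
      ∀ ς₀ ∈ ({-1, 1} : Set ℝ), ∀ ς₁ ∈ ({-1, 1} : Set ℝ), ∀ ς₂ ∈ ({-1, 1} : Set ℝ),
        ∀ t ∈ Set.Icc 0 T, ∀ p : Fin 3 → ℝ, p ∉ K → ψB ς₀ ς₁ ς₂ (pt t p) = 0)
    -- same initial data on `S₁`
    (hinit : ∀ ς₀ ∈ ({-1, 1} : Set ℝ), ∀ ς₁ ∈ ({-1, 1} : Set ℝ), ∀ ς₂ ∈ ({-1, 1} : Set ℝ),
      ∀ p ∈ S1, ψA ς₀ ς₁ ς₂ (pt 0 p) = ψB ς₀ ς₁ ς₂ (pt 0 p)) :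
    ∀ ς₀ ∈ ({-1, 1} : Set ℝ), ∀ ς₁ ∈ ({-1, 1} : Set ℝ), ∀ ς₂ ∈ ({-1, 1} : Set ℝ),
      ∀ t : ℝ, 0 ≤ t → ∀ p ∈ closure S1,
        ψA ς₀ ς₁ ς₂ (pt t p) = ψB ς₀ ς₁ ς₂ (pt t p) := by
  intro a ha b hb c hc t ht p hp
  have hωnn : 0 ≤ ω := by rw [hω]; exact div_nonneg hm hhbar.le
  set φ : ℝ → ℝ → ℝ → (Fin 4 → ℝ) → ℂ := fun a b c x => ψA a b c x - ψB a b c x with hφdef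
  have hregφ : ∀ ς₀ ∈ ({-1, 1} : Set ℝ), ∀ ς₁ ∈ ({-1, 1} : Set ℝ), ∀ ς₂ ∈ ({-1, 1} : Set ℝ),
      ContDiffOn ℝ 1 (φ ς₀ ς₁ ς₂) {x : Fin 4 → ℝ | 0 ≤ x 0 ∧ sp x ∈ closure S1} := by
    intro a' ha' b' hb' c' hc'
    exact (hregA a' ha' b' hb' c' hc').sub (hregB a' ha' b' hb' c' hc')
  have heqφ : ∀ ς₀ ∈ ({-1, 1} : Set ℝ), ∀ ς₁ ∈ ({-1, 1} : Set ℝ), ∀ ς₂ ∈ ({-1, 1} : Set ℝ),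
      ∀ x : Fin 4 → ℝ, 0 < x 0 → sp x ∈ S1 →
        pdC 0 (φ ς₀ ς₁ ς₂) x - (ς₀ : ℂ) * pdC 1 (φ ς₀ ς₁ ς₂) x
          - (ς₁ : ℂ) * pdC 2 (φ ς₀ ς₁ ς₂) x - (ς₂ : ℂ) * pdC 3 (φ ς₀ ς₁ ς₂) x
          + Complex.I * (ω : ℂ) * φ ς₀ (-ς₁) ς₂ x
          + Complex.I * (ω : ℂ) * φ ς₀ ς₁ (-ς₂) x = 0 := by
    intro a' ha' b' hb' c' hc' x hx0 hxs
    have hD : {y : Fin 4 → ℝ | 0 ≤ y 0 ∧ sp y ∈ closure S1} ∈ nhds x :=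
      Filter.mem_of_superset (isOpen_U.mem_nhds ⟨hx0, hxs⟩) U_subset_D
    have hdA : DifferentiableAt ℝ (ψA a' b' c') x :=
      ((hregA a' ha' b' hb' c' hc').differentiableOn one_ne_zero).differentiableAt hD
    have hdB : DifferentiableAt ℝ (ψB a' b' c') x :=
      ((hregB a' ha' b' hb' c' hc').differentiableOn one_ne_zero).differentiableAt hD
    have hsub : ∀ i : Fin 4, pdC i (φ a' b' c') x
        = pdC i (ψA a' b' c') x - pdC i (ψB a' b' c') x := by
      intro i
      show fderiv ℝ (fun y => ψA a' b' c' y - ψB a' b' c' y) x (Pi.single i 1)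
        = fderiv ℝ (ψA a' b' c') x (Pi.single i 1) - fderiv ℝ (ψB a' b' c') x (Pi.single i 1)
      rw [fderiv_fun_sub hdA hdB]
      rfl
    have hA := heqA a' ha' b' hb' c' hc' x hx0 hxs
    have hB := heqB a' ha' b' hb' c' hc' x hx0 hxs
    rw [hsub 0, hsub 1, hsub 2, hsub 3]
    have hfl1 : φ a' (-b') c' x = ψA a' (-b') c' x - ψB a' (-b') c' x := rfl
    have hfl2 : φ a' b' (-c') x = ψA a' b' (-c') x - ψB a' b' (-c') x := rfl
    rw [hfl1, hfl2]
    linear_combination hA - hB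
  have hbc1φ : ∀ c' ∈ ({-1, 1} : Set ℝ), ∀ s : ℝ, 0 ≤ s → ∀ r bb : ℝ, r < bb →
      ‖φ (-1) 1 c' ![s, r, r, bb]‖ ≤ ‖φ 1 (-1) c' ![s, r, r, bb]‖ := by
    intro c' hc' s hs r bb hrbb
    have e1 := hbc1A c' hc' s hs r bb hrbb
    have e2 := hbc1B c' hc' s hs r bb hrbb
    have e3 : φ (-1) 1 c' ![s, r, r, bb]
        = Complex.exp (θ₁ * Complex.I) * ((μ |r - bb| : ℝ) : ℂ) * φ 1 (-1) c' ![s, r, r, bb] := by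
      show ψA (-1) 1 c' ![s, r, r, bb] - ψB (-1) 1 c' ![s, r, r, bb]
        = Complex.exp (θ₁ * Complex.I) * ((μ |r - bb| : ℝ) : ℂ)
          * (ψA 1 (-1) c' ![s, r, r, bb] - ψB 1 (-1) c' ![s, r, r, bb])
      rw [e1, e2]; ring
    rw [e3, norm_mul, norm_mul]
    have hexp : ‖Complex.exp ((θ₁ : ℂ) * Complex.I)‖ = 1 := by
      exact Complex.norm_exp_ofReal_mul_I θ₁
    have hμn : ‖((μ |r - bb| : ℝ) : ℂ)‖ ≤ 1 := by
      rw [Complex.norm_real, Real.norm_eq_abs, _root_.abs_of_nonneg (hμ01 _ (abs_nonneg _)).1]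
      exact (hμ01 _ (abs_nonneg _)).2
    rw [hexp, one_mul]
    exact mul_le_of_le_one_left (norm_nonneg _) hμn
  have hbc2φ : ∀ b' ∈ ({-1, 1} : Set ℝ), ∀ s : ℝ, 0 ≤ s → ∀ aa r : ℝ, aa < r →
      ‖φ 1 b' (-1) ![s, r, aa, r]‖ ≤ ‖φ (-1) b' 1 ![s, r, aa, r]‖ := by
    intro b' hb' s hs aa r haar
    have e1 := hbc2A b' hb' s hs aa r haar
    have e2 := hbc2B b' hb' s hs aa r haar
    have e3 : φ 1 b' (-1) ![s, r, aa, r]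
        = Complex.exp (θ₂ * Complex.I) * ((μ |aa - r| : ℝ) : ℂ) * φ (-1) b' 1 ![s, r, aa, r] := by
      show ψA 1 b' (-1) ![s, r, aa, r] - ψB 1 b' (-1) ![s, r, aa, r]
        = Complex.exp (θ₂ * Complex.I) * ((μ |aa - r| : ℝ) : ℂ)
          * (ψA (-1) b' 1 ![s, r, aa, r] - ψB (-1) b' 1 ![s, r, aa, r])
      rw [e1, e2]; ring
    rw [e3, norm_mul, norm_mul]
    have hexp : ‖Complex.exp ((θ₂ : ℂ) * Complex.I)‖ = 1 := by
      exact Complex.norm_exp_ofReal_mul_I θ₂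
    have hμn : ‖((μ |aa - r| : ℝ) : ℂ)‖ ≤ 1 := by
      rw [Complex.norm_real, Real.norm_eq_abs, _root_.abs_of_nonneg (hμ01 _ (abs_nonneg _)).1]
      exact (hμ01 _ (abs_nonneg _)).2
    rw [hexp, one_mul]
    exact mul_le_of_le_one_left (norm_nonneg _) hμn
  have hinitφ : InitH φ := by
    intro a' ha' b' hb' c' hc'
    have hcont : ContinuousOn (fun q => φ a' b' c' (pt 0 q)) (closure S1) :=
      ((hregφ a' ha' b' hb' c' hc').continuousOn).comp (cont_pt_sec 0).continuousOn
        (fun q hq => ⟨le_rfl, by rw [sp_pt]; exact hq⟩)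
    refine eq_zero_on_closure hcont (fun q hq => ?_)
    show ψA a' b' c' (pt 0 q) - ψB a' b' c' (pt 0 q) = 0
    rw [hinit a' ha' b' hb' c' hc' q hq, sub_self]
  have hsuppφ : ∀ T : ℝ, ∃ K : Set (Fin 3 → ℝ), IsCompact K ∧
      ∀ a' ∈ ({-1, 1} : Set ℝ), ∀ b' ∈ ({-1, 1} : Set ℝ), ∀ c' ∈ ({-1, 1} : Set ℝ),
        ∀ s ∈ Set.Icc (0 : ℝ) T, ∀ q : Fin 3 → ℝ, q ∉ K → φ a' b' c' (pt s q) = 0 := by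
    intro T
    obtain ⟨KA, hKA, hKAz⟩ := hsuppA T
    obtain ⟨KB, hKB, hKBz⟩ := hsuppB T
    refine ⟨KA ∪ KB, hKA.union hKB, fun a' ha' b' hb' c' hc' s hs q hq => ?_⟩
    show ψA a' b' c' (pt s q) - ψB a' b' c' (pt s q) = 0
    rw [hKAz a' ha' b' hb' c' hc' s hs q (fun h => hq (Or.inl h)),
      hKBz a' ha' b' hb' c' hc' s hs q (fun h => hq (Or.inr h)), sub_zero]
  have hk := key ω hωnn φ hregφ heqφ hbc1φ hbc2φ hinitφ hsuppφ a ha b hb c hc t ht p hp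
  exact sub_eq_zero.mp hk
end
end
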